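/- arXiv:0707.2849 — 9 statements merged into one kernel-verified Lean document; each statement's English description precedes it below -/
import Mathlib

section
/- Let p be an odd prime and let f : ℤ_p → ℚ_p be continuous. Then the fermionic p-adic integral of f exists (i.e. the sequence N ↦ Σ_{x=0}^{p^N − 1} (−1)^x f(x) converges in ℚ_p as N → ∞), the fermionic integral of the shifted function f₁(x) = f(x+1) also exists, and I_{−1}(f₁) + I_{−1}(f) = 2·f(0). -/
open Filter Finset

private lemma sum_range_mul_block {M : Type*} [AddCommMonoid M] (g : ℕ → M) (m n : ℕ) :
    ∑ x ∈ Finset.range (m * n), g x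
      = ∑ j ∈ Finset.range m, ∑ y ∈ Finset.range n, g (j * n + y) := by
  induction m with
  | zero => simp
  | succ m ih =>
      rw [Nat.succ_mul, Finset.sum_range_add, ih, Finset.sum_range_succ]

/-- For an odd prime `p` and a continuous `f : ℤ_[p] → ℚ_[p]`, the fermionic `p`-adic
integral `I_{-1}(f) = lim_N Σ_{x=0}^{p^N-1} (-1)^x f(x)` exists, the integral of the
shift `f₁(x) = f(x+1)` exists, and `I_{-1}(f₁) + I_{-1}(f) = 2 f(0)`. -/
theorem fermionic_integral_exists_and_shift (p : ℕ) [Fact p.Prime] (hp : Odd p)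
    (f : ℤ_[p] → ℚ_[p]) (hf : Continuous f) :
    ∃ I I₁ : ℚ_[p],
      Filter.Tendsto
        (fun N : ℕ => ∑ x ∈ Finset.range (p ^ N), (-1 : ℚ_[p]) ^ x * f (x : ℤ_[p]))
        Filter.atTop (nhds I) ∧
      Filter.Tendsto
        (fun N : ℕ => ∑ x ∈ Finset.range (p ^ N), (-1 : ℚ_[p]) ^ x * f ((x : ℤ_[p]) + 1))
        Filter.atTop (nhds I₁) ∧
      I₁ + I = 2 * f 0 := by
  have hp1 : (1 : ℝ) < p := by exact_mod_cast (Fact.out : p.Prime).one_lt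
  set S : ℕ → ℚ_[p] :=
    fun N => ∑ x ∈ Finset.range (p ^ N), (-1 : ℚ_[p]) ^ x * f (x : ℤ_[p]) with hS
  have huc : UniformContinuous f := CompactSpace.uniformContinuous_of_continuous hf
  -- consecutive differences are small
  have key : ∀ ε : ℝ, 0 < ε → ∃ N₀ : ℕ, ∀ N, N₀ ≤ N → ‖S (N + 1) - S N‖ ≤ ε := by
    intro ε hε
    obtain ⟨δ, hδ, hδf⟩ := Metric.uniformContinuous_iff.mp huc ε hε
    obtain ⟨N₀, hN₀⟩ := exists_pow_lt_of_lt_one hδ (inv_lt_one_of_one_lt₀ hp1)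
    refine ⟨N₀, fun N hN => ?_⟩
    have hpow : ∀ j y : ℕ, (-1 : ℚ_[p]) ^ (j * p ^ N + y) = (-1) ^ j * (-1) ^ y := by
      intro j y
      rw [pow_add, pow_mul', (hp.pow : Odd (p ^ N)).neg_one_pow]
    set T : ℕ → ℚ_[p] :=
      fun j => ∑ y ∈ Finset.range (p ^ N), (-1 : ℚ_[p]) ^ y * f ((j * p ^ N + y : ℕ) : ℤ_[p])
      with hT
    have hT0 : T 0 = S N := by simp [hT, hS]
    have hsplit : S (N + 1) = ∑ j ∈ Finset.range p, (-1 : ℚ_[p]) ^ j * T j := by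
      have hpN : p ^ (N + 1) = p * p ^ N := by ring
      rw [hS, hT]
      simp only [hpN]
      rw [sum_range_mul_block (fun x => (-1 : ℚ_[p]) ^ x * f (x : ℤ_[p])) p (p ^ N)]
      refine Finset.sum_congr rfl fun j _ => ?_
      rw [Finset.mul_sum]
      refine Finset.sum_congr rfl fun y _ => ?_
      rw [hpow]; ring
    have hgeom : ∑ j ∈ Finset.range p, (-1 : ℚ_[p]) ^ j = 1 := by
      rw [neg_one_geom_sum, if_neg (Nat.not_even_iff_odd.mpr hp)]
    have hdiff : S (N + 1) - S N
        = ∑ j ∈ Finset.range p, (-1 : ℚ_[p]) ^ j * (T j - T 0) := by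
      have h1 : ∑ j ∈ Finset.range p, (-1 : ℚ_[p]) ^ j * (T j - T 0)
          = (∑ j ∈ Finset.range p, (-1 : ℚ_[p]) ^ j * T j)
            - (∑ j ∈ Finset.range p, (-1 : ℚ_[p]) ^ j) * T 0 := by
        rw [Finset.sum_mul, ← Finset.sum_sub_distrib]
        exact Finset.sum_congr rfl fun j _ => by ring
      rw [h1, hgeom, one_mul, ← hsplit, hT0]
    rw [hdiff]
    apply IsUltrametricDist.norm_sum_le_of_forall_le_of_nonneg hε.le
    intro j _
    rw [norm_mul]
    have h1 : ‖(-1 : ℚ_[p]) ^ j‖ = 1 := by simp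
    rw [h1, one_mul]
    have h2 : T j - T 0
        = ∑ y ∈ Finset.range (p ^ N),
            (-1 : ℚ_[p]) ^ y * (f ((j * p ^ N + y : ℕ) : ℤ_[p]) - f (y : ℤ_[p])) := by
      rw [hT, ← Finset.sum_sub_distrib]
      refine Finset.sum_congr rfl fun y _ => ?_
      rw [mul_sub]
      norm_num
    rw [h2]
    apply IsUltrametricDist.norm_sum_le_of_forall_le_of_nonneg hε.le
    intro y _
    rw [norm_mul]
    have h3 : ‖(-1 : ℚ_[p]) ^ y‖ = 1 := by simp
    rw [h3, one_mul]
    have hd : dist (((j * p ^ N + y : ℕ) : ℤ_[p])) ((y : ℕ) : ℤ_[p]) < δ := by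
      rw [dist_eq_norm]
      have he : (((j * p ^ N + y : ℕ) : ℤ_[p])) - ((y : ℕ) : ℤ_[p])
          = (j : ℤ_[p]) * (p : ℤ_[p]) ^ N := by push_cast; ring
      rw [he]
      calc ‖(j : ℤ_[p]) * (p : ℤ_[p]) ^ N‖
          ≤ ‖(p : ℤ_[p]) ^ N‖ := by
            rw [norm_mul]
            exact mul_le_of_le_one_left (norm_nonneg _) (PadicInt.norm_le_one _)
        _ = ((p : ℝ)⁻¹) ^ N := by
            rw [PadicInt.norm_p_pow, zpow_neg, zpow_natCast, inv_pow]
        _ ≤ ((p : ℝ)⁻¹) ^ N₀ := by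
            apply pow_le_pow_of_le_one (by positivity) (inv_le_one_of_one_le₀ hp1.le) hN
        _ < δ := hN₀
    have := hδf hd
    rw [dist_eq_norm] at this
    exact this.le
  -- S is Cauchy
  have hcau : CauchySeq S := by
    rw [Metric.cauchySeq_iff']
    intro ε hε
    obtain ⟨N₀, hN₀⟩ := key (ε / 2) (half_pos hε)
    refine ⟨N₀, fun n hn => ?_⟩
    rw [dist_eq_norm]
    have htel : S n - S N₀ = ∑ k ∈ Finset.Ico N₀ n, (S (k + 1) - S k) := by
      rw [Finset.sum_Ico_eq_sub _ hn, Finset.sum_range_sub, Finset.sum_range_sub]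
      ring
    rw [htel]
    calc ‖∑ k ∈ Finset.Ico N₀ n, (S (k + 1) - S k)‖
        ≤ ε / 2 := IsUltrametricDist.norm_sum_le_of_forall_le_of_nonneg (by positivity)
          (fun k hk => hN₀ k (Finset.mem_Ico.mp hk).1)
      _ < ε := half_lt_self hε
  obtain ⟨I, hI⟩ := cauchySeq_tendsto_of_complete hcau
  -- shift identity
  have shift : ∀ N : ℕ,
      (∑ x ∈ Finset.range (p ^ N), (-1 : ℚ_[p]) ^ x * f ((x : ℤ_[p]) + 1))
        = f 0 + f ((p : ℤ_[p]) ^ N) - S N := by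
    intro N
    have htel : ∑ x ∈ Finset.range (p ^ N),
        ((fun k : ℕ => (-1 : ℚ_[p]) ^ k * f ((k : ℕ) : ℤ_[p])) x
          - (fun k : ℕ => (-1 : ℚ_[p]) ^ k * f ((k : ℕ) : ℤ_[p])) (x + 1))
        = (-1 : ℚ_[p]) ^ (0 : ℕ) * f ((0 : ℕ) : ℤ_[p])
          - (-1 : ℚ_[p]) ^ (p ^ N) * f ((p ^ N : ℕ) : ℤ_[p]) :=
      Finset.sum_range_sub' (fun k : ℕ => (-1 : ℚ_[p]) ^ k * f ((k : ℕ) : ℤ_[p])) (p ^ N)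
    have hterm : ∀ x : ℕ,
        (fun k : ℕ => (-1 : ℚ_[p]) ^ k * f ((k : ℕ) : ℤ_[p])) x
          - (fun k : ℕ => (-1 : ℚ_[p]) ^ k * f ((k : ℕ) : ℤ_[p])) (x + 1)
        = (-1 : ℚ_[p]) ^ x * f ((x : ℤ_[p]) + 1) + (-1 : ℚ_[p]) ^ x * f (x : ℤ_[p]) := by
      intro x
      simp only []
      have : (((x + 1 : ℕ)) : ℤ_[p]) = (x : ℤ_[p]) + 1 := by push_cast; ring
      rw [this, pow_succ]
      ring
    have hrhs : (-1 : ℚ_[p]) ^ (0 : ℕ) * f ((0 : ℕ) : ℤ_[p])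
        - (-1 : ℚ_[p]) ^ (p ^ N) * f ((p ^ N : ℕ) : ℤ_[p])
        = f 0 + f ((p : ℤ_[p]) ^ N) := by
      rw [(hp.pow : Odd (p ^ N)).neg_one_pow]
      have : ((p ^ N : ℕ) : ℤ_[p]) = (p : ℤ_[p]) ^ N := by push_cast; ring
      rw [this]
      simp
    simp only [hterm] at htel
    rw [Finset.sum_add_distrib] at htel
    rw [hrhs] at htel
    rw [← htel, hS]
    ring
  have hlim : Tendsto (fun N : ℕ => (p : ℤ_[p]) ^ N) atTop (nhds 0) := by
    apply tendsto_pow_atTop_nhds_zero_of_norm_lt_one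
    rw [PadicInt.norm_p]
    exact inv_lt_one_of_one_lt₀ hp1
  have h2 : Tendsto (fun N : ℕ => f 0 + f ((p : ℤ_[p]) ^ N) - S N) atTop
      (nhds (f 0 + f 0 - I)) :=
    (tendsto_const_nhds.add ((hf.tendsto 0).comp hlim)).sub hI
  refine ⟨I, f 0 + f 0 - I, hI, ?_, by ring⟩
  have := (funext shift : (fun N : ℕ => ∑ x ∈ Finset.range (p ^ N),
      (-1 : ℚ_[p]) ^ x * f ((x : ℤ_[p]) + 1))
    = fun N : ℕ => f 0 + f ((p : ℤ_[p]) ^ N) - S N)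
  rw [this]
  exact h2
end

section
/- Let p be an odd prime, h an integer, and q ∈ ℤ_p with |q − 1|_p < 1 (so q is a unit and q^h is defined). Let (E_n)_{n≥0} be the unique sequence in ℚ_p satisfying q^h · Σ_{k=0}^{n} C(n,k) E_k + E_n = 2·δ_{n,0} for all n ≥ 0. Then for every n ≥ 0, the limit lim_{N→∞} Σ_{x=0}^{p^N − 1} (−1)^x q^{h x} x^n exists in ℚ_p and equals E_n (Witt's formula for the (h,q)-Euler numbers). -/
open Finset Filter IsUltrametricDist

section WittAux

variable {p : ℕ} [Fact p.Prime]

private lemma witt_norm_sum_le {s : Finset ℕ} {f : ℕ → ℚ_[p]} {C : ℝ} (hC : 0 ≤ C)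
    (h : ∀ i ∈ s, ‖f i‖ ≤ C) : ‖∑ i ∈ s, f i‖ ≤ C :=
  norm_sum_le_of_forall_le_of_nonneg hC h

private lemma witt_geom_norm (a : ℚ_[p]) (ha : ‖a‖ ≤ 1) (m : ℕ) : ‖a ^ m - 1‖ ≤ ‖a - 1‖ := by
  rw [← geom_sum_mul, norm_mul]
  have hsum : ‖∑ i ∈ range m, a ^ i‖ ≤ 1 := by
    refine witt_norm_sum_le zero_le_one fun i _ => ?_
    rw [norm_pow]
    exact pow_le_one₀ (norm_nonneg a) ha
  calc ‖∑ i ∈ range m, a ^ i‖ * ‖a - 1‖ ≤ 1 * ‖a - 1‖ :=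
        mul_le_mul_of_nonneg_right hsum (norm_nonneg _)
    _ = ‖a - 1‖ := one_mul _

private lemma witt_pow_p_norm (a : ℚ_[p]) (ha : ‖a‖ ≤ 1) {c : ℝ} (hc1 : ‖a - 1‖ ≤ c)
    (hcp : ‖(p : ℚ_[p])‖ ≤ c) : ‖a ^ p - 1‖ ≤ c * ‖a - 1‖ := by
  have hc0 : (0:ℝ) ≤ c := le_trans (norm_nonneg _) hcp
  rw [← geom_sum_mul, norm_mul]
  have key : (∑ i ∈ range p, a ^ i) = (∑ i ∈ range p, (a ^ i - 1)) + p := by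
    rw [Finset.sum_sub_distrib]
    simp [Finset.sum_const, card_range]
  have hsum : ‖∑ i ∈ range p, a ^ i‖ ≤ c := by
    rw [key]
    refine (norm_add_le_max _ _).trans (max_le ?_ hcp)
    exact witt_norm_sum_le hc0 fun i _ => (witt_geom_norm a ha i).trans hc1
  exact mul_le_mul_of_nonneg_right hsum (norm_nonneg _)

private lemma witt_pow_pow_norm (a : ℚ_[p]) (ha : ‖a‖ ≤ 1) {c : ℝ} (hc1 : ‖a - 1‖ ≤ c)
    (hcp : ‖(p : ℚ_[p])‖ ≤ c) (hc : c ≤ 1) :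
    ∀ N : ℕ, ‖a ^ p ^ N - 1‖ ≤ c ^ N * ‖a - 1‖ := by
  have hc0 : (0:ℝ) ≤ c := le_trans (norm_nonneg _) hcp
  intro N
  induction N with
  | zero => simp
  | succ N IH =>
      have hb : ‖a ^ p ^ N‖ ≤ 1 := by
        rw [norm_pow]; exact pow_le_one₀ (norm_nonneg a) ha
      have hb1 : ‖a ^ p ^ N - 1‖ ≤ c := by
        refine IH.trans ?_
        calc c ^ N * ‖a - 1‖ ≤ 1 * c :=
              mul_le_mul (pow_le_one₀ hc0 hc) hc1 (norm_nonneg _) zero_le_one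
          _ = c := one_mul c
      have hfin := witt_pow_p_norm (a ^ p ^ N) hb hb1 hcp
      rw [← pow_mul, ← pow_succ] at hfin
      refine hfin.trans ?_
      calc c * ‖a ^ p ^ N - 1‖ ≤ c * (c ^ N * ‖a - 1‖) :=
            mul_le_mul_of_nonneg_left IH hc0
        _ = c ^ (N + 1) * ‖a - 1‖ := by ring

private lemma witt_tendsto_pow_pow (a : ℚ_[p]) (ha : ‖a - 1‖ < 1) :
    Tendsto (fun N : ℕ => a ^ p ^ N) atTop (nhds 1) := by
  have hp1 : ‖(p : ℚ_[p])‖ < 1 := Padic.norm_p_lt_one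
  have hc0 : (0:ℝ) ≤ max ‖a - 1‖ ‖(p : ℚ_[p])‖ := le_max_of_le_left (norm_nonneg _)
  have hclt : max ‖a - 1‖ ‖(p : ℚ_[p])‖ < 1 := max_lt ha hp1
  have hanorm : ‖a‖ ≤ 1 := by
    have h1 : a = (a - 1) + 1 := by ring
    calc ‖a‖ = ‖(a - 1) + 1‖ := by rw [← h1]
      _ ≤ max ‖a - 1‖ ‖(1:ℚ_[p])‖ := norm_add_le_max _ _
      _ ≤ 1 := by rw [norm_one]; exact max_le ha.le le_rfl
  rw [tendsto_iff_norm_sub_tendsto_zero]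
  have hbound := witt_pow_pow_norm a hanorm (le_max_left _ _) (le_max_right _ _) hclt.le
  refine squeeze_zero (fun N => norm_nonneg _) hbound ?_
  simpa using (tendsto_pow_atTop_nhds_zero_of_lt_one hc0 hclt).mul_const ‖a - 1‖

private lemma witt_zpow_norm_lt (q : ℤ_[p]) (hq : ‖q - 1‖ < 1) (h : ℤ) :
    ‖(q : ℚ_[p]) ^ h - 1‖ < 1 := by
  set a : ℚ_[p] := (q : ℚ_[p]) with haq
  have ha1 : ‖a - 1‖ < 1 := by
    have hcast : ((q - 1 : ℤ_[p]) : ℚ_[p]) = a - 1 := by push_cast [haq]; ring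
    rw [← hcast, PadicInt.padic_norm_e_of_padicInt]
    exact hq
  have hale : ‖a‖ ≤ 1 := by
    have h1 : a = (a - 1) + 1 := by ring
    calc ‖a‖ = ‖(a - 1) + 1‖ := by rw [← h1]
      _ ≤ max ‖a - 1‖ ‖(1:ℚ_[p])‖ := norm_add_le_max _ _
      _ ≤ 1 := by rw [norm_one]; exact max_le ha1.le le_rfl
  have haeq : ‖a‖ = 1 := by
    refine le_antisymm hale ?_
    by_contra hx
    push_neg at hx
    have h2 : a + -(a - 1) = 1 := by ring
    have h3 : (1:ℝ) ≤ max ‖a‖ ‖a - 1‖ := by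
      calc (1:ℝ) = ‖a + -(a - 1)‖ := by rw [h2, norm_one]
        _ ≤ max ‖a‖ ‖-(a - 1)‖ := norm_add_le_max _ _
        _ = max ‖a‖ ‖a - 1‖ := by rw [norm_neg]
    exact absurd h3 (not_le.mpr (max_lt hx ha1))
  rcases Int.natAbs_eq h with he | he
  · rw [he, zpow_natCast]
    exact (witt_geom_norm a hale _).trans_lt ha1
  · rw [he, zpow_neg, zpow_natCast]
    set m := h.natAbs
    have hm : ‖a ^ m‖ = 1 := by rw [norm_pow, haeq, one_pow]
    have hne : a ^ m ≠ 0 := by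
      intro h0; rw [h0, norm_zero] at hm; norm_num at hm
    have hinv : (a ^ m)⁻¹ - 1 = (1 - a ^ m) * (a ^ m)⁻¹ := by
      field_simp
    rw [hinv, norm_mul, norm_inv, hm, inv_one, mul_one, norm_sub_rev]
    exact (witt_geom_norm a hale m).trans_lt ha1

private lemma witt_F_zero (E : ℕ → ℚ_[p]) (n : ℕ) :
    (∑ k ∈ range (n + 1), (n.choose k : ℚ_[p]) * E k * (0 : ℚ_[p]) ^ (n - k)) = E n := by
  rw [Finset.sum_eq_single n]
  · simp
  · intro b hb hbn
    have hnb : n - b ≠ 0 := by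
      rw [mem_range] at hb; omega
    rw [zero_pow hnb, mul_zero]
  · intro habs
    exact absurd (Finset.self_mem_range_succ n) habs

private lemma witt_swap (n : ℕ) (f : ℕ → ℕ → ℚ_[p]) :
    ∑ j ∈ range (n + 1), ∑ k ∈ range (j + 1), f j k
      = ∑ k ∈ range (n + 1), ∑ j ∈ Finset.Ico k (n + 1), f j k := by
  simp only [Finset.range_eq_Ico]
  exact (Finset.sum_Ico_Ico_comm 0 (n + 1) fun k j => f j k).symm

private lemma witt_G_succ (E : ℕ → ℚ_[p]) (n : ℕ) (t : ℚ_[p]) :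
    (∑ k ∈ range (n + 1), (n.choose k : ℚ_[p]) * E k * (t + 1) ^ (n - k))
      = ∑ j ∈ range (n + 1), (n.choose j : ℚ_[p]) * t ^ (n - j)
          * (∑ k ∈ range (j + 1), (j.choose k : ℚ_[p]) * E k) := by
  have hrhs : (∑ j ∈ range (n + 1), (n.choose j : ℚ_[p]) * t ^ (n - j)
        * (∑ k ∈ range (j + 1), (j.choose k : ℚ_[p]) * E k))
      = ∑ j ∈ range (n + 1), ∑ k ∈ range (j + 1),
          (n.choose j : ℚ_[p]) * t ^ (n - j) * ((j.choose k : ℚ_[p]) * E k) :=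
    Finset.sum_congr rfl fun j _ => Finset.mul_sum _ _ _
  rw [hrhs, witt_swap]
  apply Finset.sum_congr rfl
  intro k hk
  have hkn : k ≤ n := by rw [mem_range] at hk; omega
  rw [Finset.sum_Ico_eq_sum_range]
  have hnk : n + 1 - k = (n - k) + 1 := by omega
  rw [hnk, show t + 1 = 1 + t from add_comm t 1, add_pow, Finset.mul_sum]
  apply Finset.sum_congr rfl
  intro i hi
  have hik : i ≤ n - k := by rw [mem_range] at hi; omega
  have hchoose : n.choose (k + i) * (k + i).choose k = n.choose k * ((n - k).choose i) := by
    rw [Nat.choose_mul (by omega)]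
    congr 2
    omega
  have hcast := congrArg (Nat.cast : ℕ → ℚ_[p]) hchoose
  push_cast at hcast
  have hexp : n - (k + i) = n - k - i := by omega
  rw [hexp]
  linear_combination (-(t ^ (n - k - i) * E k)) * hcast

private lemma witt_step (Q : ℚ_[p]) (E : ℕ → ℚ_[p])
    (hE : ∀ n : ℕ,
      Q * (∑ k ∈ Finset.range (n + 1), (n.choose k : ℚ_[p]) * E k) + E n
        = 2 * if n = 0 then 1 else 0) (n : ℕ) (t : ℚ_[p]) :
    Q * (∑ k ∈ range (n + 1), (n.choose k : ℚ_[p]) * E k * (t + 1) ^ (n - k))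
      + (∑ k ∈ range (n + 1), (n.choose k : ℚ_[p]) * E k * t ^ (n - k))
      = 2 * t ^ n := by
  rw [witt_G_succ, Finset.mul_sum, ← Finset.sum_add_distrib]
  have hterm : ∀ j ∈ range (n + 1),
      Q * ((n.choose j : ℚ_[p]) * t ^ (n - j) * (∑ k ∈ range (j + 1), (j.choose k : ℚ_[p]) * E k))
        + (n.choose j : ℚ_[p]) * E j * t ^ (n - j)
      = if j = 0 then (n.choose j : ℚ_[p]) * t ^ (n - j) * 2 else 0 := by
    intro j _
    have hEj := hE j
    by_cases hj : j = 0
    · rw [if_pos hj] at hEj ⊢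
      linear_combination ((n.choose j : ℚ_[p]) * t ^ (n - j)) * hEj
    · rw [if_neg hj] at hEj ⊢
      linear_combination ((n.choose j : ℚ_[p]) * t ^ (n - j)) * hEj
  rw [Finset.sum_congr rfl hterm, Finset.sum_ite_eq' (range (n + 1)) 0]
  rw [if_pos (Finset.mem_range.mpr (Nat.succ_pos n))]
  simp only [Nat.choose_zero_right, Nat.cast_one, Nat.sub_zero, one_mul]
  ring

private lemma witt_key (Q : ℚ_[p]) (E : ℕ → ℚ_[p])
    (hE : ∀ n : ℕ,
      Q * (∑ k ∈ Finset.range (n + 1), (n.choose k : ℚ_[p]) * E k) + E n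
        = 2 * if n = 0 then 1 else 0) (n : ℕ) :
    ∀ M : ℕ, E n = 2 * (∑ x ∈ range M, (-Q) ^ x * (x : ℚ_[p]) ^ n)
        + (-Q) ^ M * (∑ k ∈ range (n + 1),
            (n.choose k : ℚ_[p]) * E k * ((M : ℚ_[p])) ^ (n - k)) := by
  intro M
  induction M with
  | zero =>
      simp only [range_zero, sum_empty, mul_zero, zero_add, pow_zero, one_mul, Nat.cast_zero]
      exact (witt_F_zero E n).symm
  | succ M IH =>
      have hstep := witt_step Q E hE n (M : ℚ_[p])
      rw [Finset.sum_range_succ]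
      push_cast
      linear_combination IH + (-Q) ^ M * hstep

end WittAux

/-- Witt's formula for the `(h,q)`-Euler numbers: for an odd prime `p`, `h : ℤ` and
`q ∈ ℤ_[p]` with `‖q - 1‖ < 1`, the sequence `E` determined by the recurrence
`q^h · Σ_{k≤n} C(n,k) E_k + E_n = 2·δ_{n,0}` is represented by the fermionic
`p`-adic integral: `lim_N Σ_{x<p^N} (-1)^x q^{hx} x^n = E_n`. -/
theorem witt_formula_hq_euler_numbers (p : ℕ) [Fact p.Prime] (hp : Odd p)
    (h : ℤ) (q : ℤ_[p]) (hq : ‖q - 1‖ < 1) (E : ℕ → ℚ_[p])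
    (hE : ∀ n : ℕ,
      ((q : ℚ_[p]) ^ h) * (∑ k ∈ Finset.range (n + 1), (n.choose k : ℚ_[p]) * E k) + E n
        = 2 * if n = 0 then 1 else 0) :
    ∀ n : ℕ, Filter.Tendsto
      (fun N : ℕ => ∑ x ∈ Finset.range (p ^ N),
        (-1 : ℚ_[p]) ^ x * ((q : ℚ_[p]) ^ h) ^ x * (x : ℚ_[p]) ^ n)
      Filter.atTop (nhds (E n)) := by
  intro n
  set Q : ℚ_[p] := (q : ℚ_[p]) ^ h with hQdef
  have hQ1 : ‖Q - 1‖ < 1 := witt_zpow_norm_lt q hq h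
  have h1 : Tendsto (fun N : ℕ => Q ^ p ^ N) atTop (nhds 1) := witt_tendsto_pow_pow Q hQ1
  have hg : Continuous fun t : ℚ_[p] =>
      ∑ k ∈ range (n + 1), (n.choose k : ℚ_[p]) * E k * t ^ (n - k) := by
    apply continuous_finset_sum
    intro k _
    exact (continuous_const.mul (continuous_pow (n - k)))
  have hp0 : Tendsto (fun N : ℕ => ((p : ℚ_[p])) ^ N) atTop (nhds 0) :=
    tendsto_pow_atTop_nhds_zero_of_norm_lt_one Padic.norm_p_lt_one
  have h2 : Tendsto (fun N : ℕ =>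
      ∑ k ∈ range (n + 1), (n.choose k : ℚ_[p]) * E k * (((p ^ N : ℕ)) : ℚ_[p]) ^ (n - k))
      atTop (nhds (E n)) := by
    have h2' := (hg.tendsto 0).comp hp0
    simp only [Function.comp_def] at h2'
    rw [witt_F_zero E n] at h2'
    refine h2'.congr fun N => ?_
    push_cast
    rfl
  have h3 : Tendsto (fun N : ℕ =>
      (E n + Q ^ p ^ N * ∑ k ∈ range (n + 1),
        (n.choose k : ℚ_[p]) * E k * (((p ^ N : ℕ)) : ℚ_[p]) ^ (n - k)) / 2)
      atTop (nhds ((E n + 1 * E n) / 2)) :=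
    (tendsto_const_nhds.add (h1.mul h2)).div_const 2
  have heq : (E n + 1 * E n) / 2 = E n := by ring
  rw [heq] at h3
  refine h3.congr fun N => ?_
  have hodd : Odd (p ^ N) := hp.pow
  have hk := witt_key Q E hE n (p ^ N)
  rw [hodd.neg_pow] at hk
  have hsum : (∑ x ∈ Finset.range (p ^ N),
      (-1 : ℚ_[p]) ^ x * Q ^ x * (x : ℚ_[p]) ^ n)
      = ∑ x ∈ range (p ^ N), (-Q) ^ x * (x : ℚ_[p]) ^ n := by
    apply Finset.sum_congr rfl
    intro x _
    rw [neg_pow Q x]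
  rw [hsum]
  linear_combination hk / 2
end

section
/- Let p be an odd prime, h an integer, q ∈ ℤ_p with |q − 1|_p < 1, and x ∈ ℤ_p. Let (E_n)_{n≥0} be the unique sequence in ℚ_p satisfying q^h · Σ_{k=0}^{n} C(n,k) E_k + E_n = 2·δ_{n,0} for all n ≥ 0, and set E_n(x) = Σ_{l=0}^{n} C(n,l) x^{n−l} E_l. Then for every n ≥ 0, the limit lim_{N→∞} Σ_{y=0}^{p^N − 1} (−1)^y q^{h y} (x + y)^n exists in ℚ_p and equals E_n(x) (Witt's formula for the (h,q)-Euler polynomials). -/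
open Finset

lemma witt_aux_norm_le_one {p : ℕ} [Fact p.Prime] {u : ℚ_[p]} (hu : ‖u - 1‖ ≤ 1) :
    ‖u‖ ≤ 1 := by
  have : u = (u - 1) + 1 := by ring
  rw [this]
  exact le_trans (Padic.nonarchimedean _ _) (max_le hu (by simp))

lemma witt_aux_norm_pow_sub_one {p : ℕ} [Fact p.Prime] {u : ℚ_[p]} (hu : ‖u‖ ≤ 1) (m : ℕ) :
    ‖u ^ m - 1‖ ≤ ‖u - 1‖ := by
  have hs : ‖∑ i ∈ range m, u ^ i‖ ≤ 1 :=
    IsUltrametricDist.norm_sum_le_of_forall_le_of_nonneg zero_le_one fun i _ => by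
      rw [norm_pow]; exact pow_le_one₀ (norm_nonneg u) hu
  calc ‖u ^ m - 1‖ = ‖∑ i ∈ range m, u ^ i‖ * ‖u - 1‖ := by rw [← norm_mul, geom_sum_mul]
    _ ≤ 1 * ‖u - 1‖ := mul_le_mul_of_nonneg_right hs (norm_nonneg _)
    _ = ‖u - 1‖ := one_mul _

lemma witt_aux_norm_eq_one {p : ℕ} [Fact p.Prime] {v : ℚ_[p]} (hv : ‖v - 1‖ < 1) : ‖v‖ = 1 := by
  have h2 : ‖v‖ ≤ 1 := witt_aux_norm_le_one hv.le
  refine le_antisymm h2 ?_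
  by_contra hlt
  push_neg at hlt
  have h1 : (1 : ℚ_[p]) = v + -(v - 1) := by ring
  have h5 := Padic.nonarchimedean v (-(v - 1))
  rw [← h1, norm_neg, norm_one] at h5
  exact absurd h5 (by push_neg; exact max_lt hlt hv)

lemma witt_aux_norm_zpow_sub_one {p : ℕ} [Fact p.Prime] {v : ℚ_[p]} (hv : ‖v - 1‖ < 1) (h : ℤ) :
    ‖v ^ h - 1‖ ≤ ‖v - 1‖ := by
  have hv1 : ‖v‖ = 1 := witt_aux_norm_eq_one hv
  have hvne : v ≠ 0 := by intro h0; rw [h0] at hv1; simp at hv1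
  cases h with
  | ofNat n => simpa [zpow_natCast] using witt_aux_norm_pow_sub_one hv1.le n
  | negSucc n =>
    rw [zpow_negSucc]
    have hne : v ^ (n + 1) ≠ 0 := pow_ne_zero _ hvne
    have hrw : (v ^ (n + 1))⁻¹ - 1 = (1 - v ^ (n + 1)) * (v ^ (n + 1))⁻¹ := by
      field_simp
    rw [hrw, norm_mul, norm_inv, norm_pow, hv1, one_pow, inv_one, mul_one, norm_sub_rev]
    exact witt_aux_norm_pow_sub_one hv1.le _

lemma witt_aux_pow_p {p : ℕ} [hp : Fact p.Prime] {u : ℚ_[p]}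
    (hu : ‖u - 1‖ ≤ (p : ℝ)⁻¹) : ‖u ^ p - 1‖ ≤ (p : ℝ)⁻¹ * ‖u - 1‖ := by
  have hp1 : (1 : ℝ) < p := by exact_mod_cast hp.out.one_lt
  have hinv1 : (p : ℝ)⁻¹ ≤ 1 := by
    rw [inv_le_one_iff₀]; right; exact hp1.le
  have hu1 : ‖u‖ ≤ 1 := witt_aux_norm_le_one (hu.trans hinv1)
  have hsum : ‖∑ i ∈ range p, u ^ i‖ ≤ (p : ℝ)⁻¹ := by
    have hrw : ∑ i ∈ range p, u ^ i = (∑ i ∈ range p, (u ^ i - 1)) + (p : ℚ_[p]) := by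
      rw [Finset.sum_sub_distrib]
      simp [Finset.card_range]
    rw [hrw]
    refine le_trans (Padic.nonarchimedean _ _) (max_le ?_ ?_)
    · exact IsUltrametricDist.norm_sum_le_of_forall_le_of_nonneg (by positivity)
        fun i _ => le_trans (witt_aux_norm_pow_sub_one hu1 i) hu
    · rw [Padic.norm_p]
  calc ‖u ^ p - 1‖ = ‖∑ i ∈ range p, u ^ i‖ * ‖u - 1‖ := by rw [← norm_mul, geom_sum_mul]
    _ ≤ (p : ℝ)⁻¹ * ‖u - 1‖ := mul_le_mul_of_nonneg_right hsum (norm_nonneg _)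

lemma witt_aux_pow_pN {p : ℕ} [hp : Fact p.Prime] {u : ℚ_[p]}
    (hu : ‖u - 1‖ ≤ (p : ℝ)⁻¹) (N : ℕ) :
    ‖u ^ (p ^ N) - 1‖ ≤ ((p : ℝ)⁻¹) ^ N * ‖u - 1‖ := by
  have hp1 : (1 : ℝ) < p := by exact_mod_cast hp.out.one_lt
  have hinv0 : (0 : ℝ) ≤ (p : ℝ)⁻¹ := by positivity
  have hinv1 : (p : ℝ)⁻¹ ≤ 1 := by rw [inv_le_one_iff₀]; right; exact hp1.le
  induction N with
  | zero => simp
  | succ N ih =>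
    have hmid : ‖u ^ (p ^ N) - 1‖ ≤ (p : ℝ)⁻¹ := by
      refine le_trans ih ?_
      calc ((p : ℝ)⁻¹) ^ N * ‖u - 1‖ ≤ 1 * (p : ℝ)⁻¹ :=
            mul_le_mul (pow_le_one₀ hinv0 hinv1) hu (norm_nonneg _) zero_le_one
        _ = (p : ℝ)⁻¹ := one_mul _
    calc ‖u ^ p ^ (N + 1) - 1‖ = ‖(u ^ p ^ N) ^ p - 1‖ := by rw [← pow_mul, pow_succ]
      _ ≤ (p : ℝ)⁻¹ * ‖u ^ p ^ N - 1‖ := witt_aux_pow_p hmid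
      _ ≤ (p : ℝ)⁻¹ * (((p : ℝ)⁻¹) ^ N * ‖u - 1‖) := mul_le_mul_of_nonneg_left ih hinv0
      _ = ((p : ℝ)⁻¹) ^ (N + 1) * ‖u - 1‖ := by ring

/-- Witt's formula for the `(h,q)`-Euler polynomials: for an odd prime `p`, `h : ℤ`,
`q ∈ ℤ_[p]` with `‖q - 1‖ < 1`, and `x ∈ ℤ_[p]`, with `E` the `(h,q)`-Euler numbers
(determined by `q^h · Σ_{k≤n} C(n,k) E_k + E_n = 2·δ_{n,0}`) and
`E_n(x) = Σ_{l≤n} C(n,l) x^{n-l} E_l`, we have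
`lim_N Σ_{y<p^N} (-1)^y q^{hy} (x+y)^n = E_n(x)`. -/
theorem witt_formula_hq_euler_polynomials (p : ℕ) [Fact p.Prime] (hp : Odd p)
    (h : ℤ) (q : ℤ_[p]) (hq : ‖q - 1‖ < 1) (x : ℤ_[p]) (E : ℕ → ℚ_[p])
    (hE : ∀ n : ℕ,
      ((q : ℚ_[p]) ^ h) * (∑ k ∈ Finset.range (n + 1), (n.choose k : ℚ_[p]) * E k) + E n
        = 2 * if n = 0 then 1 else 0) :
    ∀ n : ℕ, Filter.Tendsto
      (fun N : ℕ => ∑ y ∈ Finset.range (p ^ N),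
        (-1 : ℚ_[p]) ^ y * ((q : ℚ_[p]) ^ h) ^ y * ((x : ℚ_[p]) + (y : ℚ_[p])) ^ n)
      Filter.atTop
      (nhds (∑ l ∈ Finset.range (n + 1), (n.choose l : ℚ_[p]) * (x : ℚ_[p]) ^ (n - l) * E l)) := by
  have hp1 : (1 : ℝ) < p := by exact_mod_cast (Fact.out : p.Prime).one_lt
  have hinv0 : (0 : ℝ) ≤ (p : ℝ)⁻¹ := by positivity
  have hp2 : (p : ℝ)⁻¹ < 1 := by
    rw [inv_lt_one_iff₀]; right; exact hp1
  have hnat : ∀ m : ℕ, ‖(m : ℚ_[p])‖ ≤ 1 := fun m => by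
    simpa using Padic.norm_int_le_one (p := p) (m : ℤ)
  set Q : ℚ_[p] := (q : ℚ_[p]) ^ h with hQdef
  -- ‖q - 1‖ ≤ 1/p in ℚ_p
  have hqe : ‖(q : ℚ_[p]) - 1‖ ≤ (p : ℝ)⁻¹ := by
    obtain ⟨c, hc⟩ := (PadicInt.norm_lt_one_iff_dvd _).mp hq
    have h1 : ((q : ℚ_[p]) - 1) = ((q - 1 : ℤ_[p]) : ℚ_[p]) := by push_cast; ring
    rw [h1, PadicInt.padic_norm_e_of_padicInt, hc, norm_mul, PadicInt.norm_p]
    calc (p : ℝ)⁻¹ * ‖c‖ ≤ (p : ℝ)⁻¹ * 1 := mul_le_mul_of_nonneg_left c.norm_le_one hinv0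
      _ = (p : ℝ)⁻¹ := mul_one _
  have hqlt : ‖(q : ℚ_[p]) - 1‖ < 1 := lt_of_le_of_lt hqe hp2
  have hQsub : ‖Q - 1‖ ≤ (p : ℝ)⁻¹ := le_trans (witt_aux_norm_zpow_sub_one hqlt h) hqe
  have hQlt : ‖Q - 1‖ < 1 := lt_of_le_of_lt hQsub hp2
  have hQnorm : ‖Q‖ = 1 := witt_aux_norm_eq_one hQlt
  -- ‖2‖ = 1
  have h2norm : ‖(2 : ℚ_[p])‖ = 1 := by
    refine le_antisymm (by simpa using Padic.norm_int_le_one (p := p) 2) ?_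
    by_contra hlt
    push_neg at hlt
    have hdvd : (p : ℤ) ∣ 2 := (Padic.norm_intCast_lt_one_iff (k := 2)).mp (by exact_mod_cast hlt)
    have hdvd' : p ∣ 2 := by exact_mod_cast hdvd
    rcases (Nat.prime_two.eq_one_or_self_of_dvd p hdvd') with h1 | h2
    · exact (Fact.out : p.Prime).one_lt.ne' h1
    · rw [h2] at hp; exact (Nat.not_odd_iff_even.mpr (by decide)) hp
  -- ‖Q + 1‖ = 1
  have hQ1 : ‖Q + 1‖ = 1 := by
    refine le_antisymm ?_ ?_
    · rw [show Q + 1 = (Q - 1) + 2 by ring]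
      exact le_trans (Padic.nonarchimedean _ _)
        (max_le hQlt.le (le_of_eq h2norm))
    · by_contra hlt
      push_neg at hlt
      have h6 := Padic.nonarchimedean (Q + 1) (-(Q - 1))
      rw [show Q + 1 + -(Q - 1) = 2 by ring, norm_neg, h2norm] at h6
      exact absurd h6 (by push_neg; exact max_lt hlt hQlt)
  -- ‖Q^{p^N} - 1‖ ≤ (1/p)^N
  have hQpN : ∀ N : ℕ, ‖Q ^ (p ^ N) - 1‖ ≤ ((p : ℝ)⁻¹) ^ N := by
    intro N
    have hqq : (q : ℚ_[p]) ≠ 0 := by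
      intro h0
      rw [show (q : ℚ_[p]) - 1 = -1 by rw [h0]; ring] at hqlt
      simp at hqlt
    have hcomm : Q ^ (p ^ N) = ((q : ℚ_[p]) ^ (p ^ N : ℕ)) ^ h := by
      rw [hQdef, ← zpow_natCast ((q : ℚ_[p]) ^ h) (p ^ N), ← zpow_mul,
        mul_comm, zpow_mul, zpow_natCast]
    rw [hcomm]
    have hv : ‖(q : ℚ_[p]) ^ (p ^ N : ℕ) - 1‖ ≤ ((p : ℝ)⁻¹) ^ N * ‖(q : ℚ_[p]) - 1‖ :=
      witt_aux_pow_pN hqe N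
    have hvlt : ‖(q : ℚ_[p]) ^ (p ^ N : ℕ) - 1‖ < 1 := by
      refine lt_of_le_of_lt hv ?_
      calc ((p : ℝ)⁻¹) ^ N * ‖(q : ℚ_[p]) - 1‖ ≤ 1 * (p : ℝ)⁻¹ :=
            mul_le_mul (pow_le_one₀ hinv0 hp2.le) hqe (norm_nonneg _) zero_le_one
        _ < 1 := by rw [one_mul]; exact hp2
    refine le_trans (witt_aux_norm_zpow_sub_one hvlt h) (le_trans hv ?_)
    calc ((p : ℝ)⁻¹) ^ N * ‖(q : ℚ_[p]) - 1‖ ≤ ((p : ℝ)⁻¹) ^ N * 1 :=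
          mul_le_mul_of_nonneg_left (hqe.trans hp2.le) (by positivity)
      _ = ((p : ℝ)⁻¹) ^ N := mul_one _
  -- the basic sums
  set a : ℕ → ℕ → ℚ_[p] :=
    fun N n => ∑ y ∈ Finset.range (p ^ N), (-1 : ℚ_[p]) ^ y * Q ^ y * (y : ℚ_[p]) ^ n with ha
  -- key algebraic identity
  have key : ∀ N m1 : ℕ,
      Q * (∑ k ∈ Finset.range (m1 + 1), (m1.choose k : ℚ_[p]) * a N k) + a N m1
        = (if m1 = 0 then 1 else 0) + Q ^ (p ^ N) * ((p : ℚ_[p]) ^ N) ^ m1 := by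
    intro N m1
    set g : ℕ → ℚ_[p] := fun y => (-1 : ℚ_[p]) ^ y * Q ^ y * (y : ℚ_[p]) ^ m1 with hg
    have hstep1 : Q * (∑ k ∈ Finset.range (m1 + 1), (m1.choose k : ℚ_[p]) * a N k)
        = ∑ y ∈ Finset.range (p ^ N),
            (-1 : ℚ_[p]) ^ y * Q ^ (y + 1) * ((y : ℚ_[p]) + 1) ^ m1 := by
      simp only [ha, Finset.mul_sum]
      rw [Finset.sum_comm]
      refine Finset.sum_congr rfl fun y _ => ?_
      rw [add_pow, Finset.mul_sum]
      refine Finset.sum_congr rfl fun k _ => by ring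
    have hlink : ∑ y ∈ Finset.range (p ^ N),
        (-1 : ℚ_[p]) ^ y * Q ^ (y + 1) * ((y : ℚ_[p]) + 1) ^ m1
        = -∑ y ∈ Finset.range (p ^ N), g (y + 1) := by
      rw [← Finset.sum_neg_distrib]
      refine Finset.sum_congr rfl fun y _ => ?_
      simp only [hg]
      push_cast
      ring
    have hshift : ∑ y ∈ Finset.range (p ^ N), g (y + 1)
        = (∑ y ∈ Finset.range (p ^ N), g y) + g (p ^ N) - g 0 := by
      have h7 := Finset.sum_range_succ' g (p ^ N)
      have h8 := Finset.sum_range_succ g (p ^ N)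
      rw [h8] at h7
      rw [eq_sub_iff_add_eq]
      exact h7.symm
    have hanm : a N m1 = ∑ y ∈ Finset.range (p ^ N), g y := rfl
    have hg0 : g 0 = if m1 = 0 then 1 else 0 := by
      simp only [hg, Nat.cast_zero, pow_zero, one_mul]
      exact zero_pow_eq m1
    have hgm : g (p ^ N) = -(Q ^ (p ^ N) * ((p : ℚ_[p]) ^ N) ^ m1) := by
      simp only [hg]
      rw [(hp.pow).neg_one_pow]
      push_cast
      ring
    rw [hstep1, hlink, hshift, hanm, hg0, hgm]
    ring
  -- the bound, by strong induction
  have hbound : ∀ m1 N : ℕ, ‖a N m1 - E m1‖ ≤ ((p : ℝ)⁻¹) ^ N := by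
    intro m1
    induction m1 using Nat.strong_induction_on with
    | _ m1 ih =>
      intro N
      have hk := key N m1
      have hEm := hE m1
      have hmain : (Q + 1) * (a N m1 - E m1)
          = (Q ^ (p ^ N) * ((p : ℚ_[p]) ^ N) ^ m1 - (if m1 = 0 then 1 else 0))
            - Q * ∑ k ∈ Finset.range m1, (m1.choose k : ℚ_[p]) * (a N k - E k) := by
        have e1 : ∑ k ∈ Finset.range (m1 + 1), (m1.choose k : ℚ_[p]) * a N k
            = ∑ k ∈ Finset.range m1, (m1.choose k : ℚ_[p]) * a N k + a N m1 := by
          rw [Finset.sum_range_succ, Nat.choose_self, Nat.cast_one, one_mul]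
        have e2 : ∑ k ∈ Finset.range (m1 + 1), (m1.choose k : ℚ_[p]) * E k
            = ∑ k ∈ Finset.range m1, (m1.choose k : ℚ_[p]) * E k + E m1 := by
          rw [Finset.sum_range_succ, Nat.choose_self, Nat.cast_one, one_mul]
        have e3 : ∑ k ∈ Finset.range m1, (m1.choose k : ℚ_[p]) * (a N k - E k)
            = ∑ k ∈ Finset.range m1, (m1.choose k : ℚ_[p]) * a N k
              - ∑ k ∈ Finset.range m1, (m1.choose k : ℚ_[p]) * E k := by
          rw [← Finset.sum_sub_distrib]
          exact Finset.sum_congr rfl fun k _ => by ring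
        rw [e1] at hk
        rw [e2] at hEm
        rw [e3]
        linear_combination hk - hEm
      have hnorm : ‖a N m1 - E m1‖ = ‖(Q + 1) * (a N m1 - E m1)‖ := by
        rw [norm_mul, hQ1, one_mul]
      rw [hnorm, hmain]
      have hsum : ‖∑ k ∈ Finset.range m1, (m1.choose k : ℚ_[p]) * (a N k - E k)‖
          ≤ ((p : ℝ)⁻¹) ^ N := by
        refine IsUltrametricDist.norm_sum_le_of_forall_le_of_nonneg (by positivity)
          fun k hk' => ?_
        rw [norm_mul]
        calc ‖(m1.choose k : ℚ_[p])‖ * ‖a N k - E k‖ ≤ 1 * ((p : ℝ)⁻¹) ^ N :=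
              mul_le_mul (hnat _) (ih k (Finset.mem_range.mp hk') N) (norm_nonneg _)
                zero_le_one
          _ = ((p : ℝ)⁻¹) ^ N := one_mul _
      have hr : ‖Q ^ (p ^ N) * ((p : ℚ_[p]) ^ N) ^ m1 - (if m1 = 0 then 1 else 0)‖
          ≤ ((p : ℝ)⁻¹) ^ N := by
        by_cases h0 : m1 = 0
        · subst h0
          simpa using hQpN N
        · simp only [h0, if_false, sub_zero]
          rw [norm_mul, norm_pow, hQnorm, one_pow, one_mul, norm_pow, norm_pow,
            Padic.norm_p, ← pow_mul]
          exact pow_le_pow_of_le_one hinv0 hp2.le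
            (Nat.le_mul_of_pos_right N (Nat.pos_of_ne_zero h0))
      calc ‖(Q ^ (p ^ N) * ((p : ℚ_[p]) ^ N) ^ m1 - (if m1 = 0 then 1 else 0))
            - Q * ∑ k ∈ Finset.range m1, (m1.choose k : ℚ_[p]) * (a N k - E k)‖
          = ‖(Q ^ (p ^ N) * ((p : ℚ_[p]) ^ N) ^ m1 - (if m1 = 0 then 1 else 0))
            + -(Q * ∑ k ∈ Finset.range m1, (m1.choose k : ℚ_[p]) * (a N k - E k))‖ := by
            rw [sub_eq_add_neg]
        _ ≤ _ := le_trans (Padic.nonarchimedean _ _) (max_le hr (by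
            rw [norm_neg, norm_mul, hQnorm, one_mul]; exact hsum))
  -- conclude
  intro n
  have hfN : ∀ N : ℕ,
      (∑ y ∈ Finset.range (p ^ N),
        (-1 : ℚ_[p]) ^ y * Q ^ y * ((x : ℚ_[p]) + (y : ℚ_[p])) ^ n)
      = ∑ l ∈ Finset.range (n + 1), (n.choose l : ℚ_[p]) * (x : ℚ_[p]) ^ (n - l) * a N l := by
    intro N
    symm
    simp only [ha, Finset.mul_sum]
    rw [Finset.sum_comm]
    refine Finset.sum_congr rfl fun y _ => ?_
    rw [add_comm ((x : ℚ_[p])) ((y : ℚ_[p])), add_pow, Finset.mul_sum]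
    refine Finset.sum_congr rfl fun l _ => by ring
  set L : ℚ_[p] := ∑ l ∈ Finset.range (n + 1),
    (n.choose l : ℚ_[p]) * (x : ℚ_[p]) ^ (n - l) * E l with hL
  have hdiff : ∀ N : ℕ,
      ‖(∑ y ∈ Finset.range (p ^ N),
        (-1 : ℚ_[p]) ^ y * Q ^ y * ((x : ℚ_[p]) + (y : ℚ_[p])) ^ n) - L‖
        ≤ ((p : ℝ)⁻¹) ^ N := by
    intro N
    rw [hfN N, hL]
    have e4 : ∑ l ∈ Finset.range (n + 1), (n.choose l : ℚ_[p]) * (x : ℚ_[p]) ^ (n - l) * a N l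
        - ∑ l ∈ Finset.range (n + 1), (n.choose l : ℚ_[p]) * (x : ℚ_[p]) ^ (n - l) * E l
        = ∑ l ∈ Finset.range (n + 1),
            (n.choose l : ℚ_[p]) * (x : ℚ_[p]) ^ (n - l) * (a N l - E l) := by
      rw [← Finset.sum_sub_distrib]
      exact Finset.sum_congr rfl fun l _ => by ring
    rw [e4]
    refine IsUltrametricDist.norm_sum_le_of_forall_le_of_nonneg (by positivity) fun l _ => ?_
    rw [norm_mul, norm_mul, norm_pow]
    have hx1 : ‖(x : ℚ_[p])‖ ≤ 1 := by
      rw [PadicInt.padic_norm_e_of_padicInt]; exact x.norm_le_one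
    calc ‖(n.choose l : ℚ_[p])‖ * ‖(x : ℚ_[p])‖ ^ (n - l) * ‖a N l - E l‖
        ≤ 1 * 1 * ((p : ℝ)⁻¹) ^ N := by
          refine mul_le_mul (mul_le_mul (hnat _) (pow_le_one₀ (norm_nonneg _) hx1)
            (by positivity) zero_le_one) (hbound l N) (norm_nonneg _) (by norm_num)
      _ = ((p : ℝ)⁻¹) ^ N := by ring
  have h0 : Filter.Tendsto (fun N : ℕ =>
      (∑ y ∈ Finset.range (p ^ N),
        (-1 : ℚ_[p]) ^ y * Q ^ y * ((x : ℚ_[p]) + (y : ℚ_[p])) ^ n) - L)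
      Filter.atTop (nhds 0) :=
    squeeze_zero_norm hdiff (tendsto_pow_atTop_nhds_zero_of_lt_one hinv0 hp2)
  have h1 := h0.add_const L
  simpa using h1
end

section
/- Let K be a field of characteristic zero, h an integer, q a nonzero element of K, and d an odd positive integer such that q^h ≠ −1 and q^{dh} ≠ −1. Then for every k ≥ 0 and every x ∈ K, the distribution relation E_{k,q}^{(h)}(x) = d^k · Σ_{a=0}^{d−1} (−1)^a q^{h a} E_{k,q^d}^{(h)}((x+a)/d) holds, where E_{k,q}^{(h)}(x) and E_{k,q^d}^{(h)}(y) are the (h,q)-Euler and (h,q^d)-Euler polynomials respectively. -/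
open Finset Polynomial

lemma key_fe {K : Type*} [Field K] (c : K) (G : ℕ → K)
    (hG : ∀ n : ℕ, c * (∑ j ∈ Finset.range (n + 1), (n.choose j : K) * G j) + G n
        = 2 * if n = 0 then 1 else 0) (k : ℕ) (x : K) :
    c * (∑ l ∈ Finset.range (k + 1), (k.choose l : K) * (x + 1) ^ (k - l) * G l)
      + ∑ l ∈ Finset.range (k + 1), (k.choose l : K) * x ^ (k - l) * G l
      = 2 * x ^ k := by
  have main : (∑ l ∈ Finset.range (k + 1), (k.choose l : K) * (x + 1) ^ (k - l) * G l)
      = ∑ m ∈ Finset.range (k + 1), ∑ j ∈ Finset.range (m + 1),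
          (k.choose m : K) * x ^ (k - m) * ((m.choose j : K) * G j) := by
    simp only [Finset.range_eq_Ico]
    rw [← Finset.sum_Ico_Ico_comm 0 (k+1)
      (fun j m => (k.choose m : K) * x ^ (k - m) * ((m.choose j : K) * G j))]
    apply Finset.sum_congr rfl
    intro l hl
    simp only [Finset.mem_Ico] at hl
    have hlk : l ≤ k := by omega
    -- inner sum over m ∈ Ico l (k+1)
    rw [Finset.sum_Ico_eq_sum_range]
    have hstep : ∀ i ∈ Finset.range (k + 1 - l),
        ((k.choose (l+i) : K) * x ^ (k - (l+i)) * (((l+i).choose l : K) * G l))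
        = (k.choose l : K) * G l * (((k-l).choose i : K) * x ^ ((k-l) - i)) := by
      intro i hi
      simp only [Finset.mem_range] at hi
      have h1 : k.choose (l+i) * (l+i).choose l = k.choose l * (k-l).choose i := by
        rw [Nat.choose_mul (by omega), Nat.add_sub_cancel_left]
      have h1c : ((k.choose (l+i)) : K) * ((l+i).choose l : K)
          = (k.choose l : K) * ((k-l).choose i : K) := by exact_mod_cast congrArg Nat.cast h1
      have h2 : k - (l + i) = (k - l) - i := by omega
      rw [h2]
      linear_combination (x ^ (k - l - i) * G l) * h1c
    rw [Finset.sum_congr rfl hstep, ← Finset.mul_sum]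
    have hpow : ∑ i ∈ Finset.range (k + 1 - l), ((k-l).choose i : K) * x ^ ((k-l) - i)
        = (x + 1) ^ (k - l) := by
      have : k + 1 - l = (k - l) + 1 := by omega
      rw [this]
      rw [add_comm x 1, add_pow]
      apply Finset.sum_congr rfl
      intro i hi
      simp [mul_comm]
    rw [hpow]
    ring
  rw [main, Finset.mul_sum, ← Finset.sum_add_distrib]
  have hterm : ∀ m ∈ Finset.range (k+1),
      (c * (∑ j ∈ Finset.range (m + 1), (k.choose m : K) * x ^ (k - m) * ((m.choose j : K) * G j))
        + (k.choose m : K) * x ^ (k - m) * G m)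
      = (if m = 0 then 2 * x ^ k else 0) := by
    intro m _
    have : (∑ j ∈ Finset.range (m + 1), (k.choose m : K) * x ^ (k - m) * ((m.choose j : K) * G j))
        = (k.choose m : K) * x ^ (k - m) * ∑ j ∈ Finset.range (m + 1), ((m.choose j : K) * G j) :=
      (Finset.mul_sum _ _ _).symm
    rw [this]
    have : c * ((k.choose m : K) * x ^ (k - m) * ∑ j ∈ Finset.range (m + 1), ((m.choose j : K) * G j))
        + (k.choose m : K) * x ^ (k - m) * G m
        = (k.choose m : K) * x ^ (k - m) *
          (c * (∑ j ∈ Finset.range (m + 1), ((m.choose j : K) * G j)) + G m) := by ring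
    rw [this, hG m]
    split
    · rename_i hm
      subst hm
      simp [mul_comm]
    · ring
  rw [Finset.sum_congr rfl hterm, Finset.sum_ite_eq' (Finset.range (k+1)) 0 (fun _ => 2 * x ^ k)]
  simp

lemma vanish_poly {K : Type*} [Field K] [CharZero K] (c : K) (hc : c ≠ -1)
    (P : Polynomial K) (hP : ∀ x : K, c * P.eval (x + 1) + P.eval x = 0) : P = 0 := by
  by_contra hP0
  have hco : (Polynomial.C c) * P.comp (Polynomial.X + 1) + P = 0 := by
    apply Polynomial.funext
    intro x
    simpa [Polynomial.eval_comp] using hP x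
  have hdeg : (P.comp (Polynomial.X + 1)).natDegree = P.natDegree := by
    rw [Polynomial.natDegree_comp]
    have : (Polynomial.X + 1 : Polynomial K).natDegree = 1 := by
      simpa using Polynomial.natDegree_X_add_C (1 : K)
    rw [this, mul_one]
  have hXadd : (Polynomial.X + 1 : Polynomial K).natDegree = 1 := by
    simpa using Polynomial.natDegree_X_add_C (1 : K)
  have hlc : (P.comp (Polynomial.X + 1)).coeff P.natDegree = P.leadingCoeff := by
    have hlcomp := Polynomial.leadingCoeff_comp (p := P) (q := Polynomial.X + 1)
      (by rw [hXadd]; exact one_ne_zero)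
    have hXlc : (Polynomial.X + 1 : Polynomial K).leadingCoeff = 1 := by
      simpa using Polynomial.leadingCoeff_X_add_C (1 : K)
    rw [hXlc, one_pow, mul_one] at hlcomp
    calc (P.comp (Polynomial.X + 1)).coeff P.natDegree
        = (P.comp (Polynomial.X + 1)).leadingCoeff := by
          rw [Polynomial.leadingCoeff, hdeg]
      _ = P.leadingCoeff := hlcomp
  have h0 : c * P.leadingCoeff + P.leadingCoeff = 0 := by
    have h3 := congrArg (fun Q => Polynomial.coeff Q P.natDegree) hco
    simp only [Polynomial.coeff_add, Polynomial.coeff_C_mul, Polynomial.coeff_zero, hlc,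
      Polynomial.coeff_natDegree] at h3
    exact h3
  have h1 : (c + 1) * P.leadingCoeff = 0 := by linear_combination h0
  rcases mul_eq_zero.mp h1 with h2 | h2
  · exact hc (eq_neg_of_add_eq_zero_left h2)
  · exact hP0 (Polynomial.leadingCoeff_eq_zero.mp h2)



/-- Distribution relation for the `(h,q)`-Euler polynomials. Over a field `K` of
characteristic zero, with `q ≠ 0`, `d` odd and positive, `q^h ≠ -1` and `q^{dh} ≠ -1`,
letting `E` (resp. `F`) be the `(h,q)`-Euler (resp. `(h,q^d)`-Euler) numbers defined by
the recurrence `q^h Σ_{k≤n} C(n,k) E_k + E_n = 2 δ_{n,0}` (resp. with `q^d` in place of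
`q`), and with the associated Euler polynomials `E_k(x) = Σ_{l≤k} C(k,l) x^{k-l} E_l`,
we have `E_{k,q}^{(h)}(x) = d^k Σ_{a=0}^{d-1} (-1)^a q^{ha} E_{k,q^d}^{(h)}((x+a)/d)`. -/
theorem distribution_relation_hq_euler (K : Type*) [Field K] [CharZero K]
    (h : ℤ) (q : K) (hq : q ≠ 0) (d : ℕ) (hdpos : 0 < d) (hd : Odd d)
    (hqh : q ^ h ≠ -1) (hqdh : q ^ ((d : ℤ) * h) ≠ -1)
    (E F : ℕ → K)
    (hE : ∀ n : ℕ,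
      q ^ h * (∑ k ∈ Finset.range (n + 1), (n.choose k : K) * E k) + E n
        = 2 * if n = 0 then 1 else 0)
    (hF : ∀ n : ℕ,
      (q ^ d) ^ h * (∑ k ∈ Finset.range (n + 1), (n.choose k : K) * F k) + F n
        = 2 * if n = 0 then 1 else 0) :
    ∀ (k : ℕ) (x : K),
      (∑ l ∈ Finset.range (k + 1), (k.choose l : K) * x ^ (k - l) * E l)
        = (d : K) ^ k * ∑ a ∈ Finset.range d, (-1 : K) ^ a * (q ^ h) ^ a *
            ∑ l ∈ Finset.range (k + 1),
              (k.choose l : K) * ((x + a) / d) ^ (k - l) * F l := by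
  intro k x
  have hd0 : (d : K) ≠ 0 := Nat.cast_ne_zero.mpr (by omega)
  have hdk0 : (d : K) ^ k ≠ 0 := pow_ne_zero _ hd0
  have hpowdh : (q ^ h) ^ d = (q ^ d) ^ h := by
    rw [← zpow_natCast (q ^ h) d, ← zpow_mul, ← zpow_natCast q d, ← zpow_mul, mul_comm]
  set T : K → K := fun y => ∑ l ∈ Finset.range (k + 1),
      (k.choose l : K) * y ^ (k - l) * F l with hT
  set L : K → K := fun y => ∑ l ∈ Finset.range (k + 1),
      (k.choose l : K) * y ^ (k - l) * E l with hL
  set R : K → K := fun y => (d : K) ^ k * ∑ a ∈ Finset.range d,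
      (-1 : K) ^ a * (q ^ h) ^ a * T ((y + a) / d) with hR
  have feE : ∀ y : K, q ^ h * L (y + 1) + L y = 2 * y ^ k := fun y => key_fe (q ^ h) E hE k y
  have feF : ∀ y : K, (q ^ d) ^ h * T (y + 1) + T y = 2 * y ^ k :=
    fun y => key_fe ((q ^ d) ^ h) F hF k y
  have feR : ∀ y : K, q ^ h * R (y + 1) + R y = 2 * y ^ k := by
    intro y
    set w : ℕ → K := fun a => (-1 : K) ^ a * (q ^ h) ^ a * T ((y + a) / d) with hw
    have step1 : q ^ h * R (y + 1) + R y
        = (d : K) ^ k * ((q ^ h * ∑ a ∈ Finset.range d,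
            (-1 : K) ^ a * (q ^ h) ^ a * T ((y + 1 + a) / d))
          + ∑ a ∈ Finset.range d, w a) := by
      simp only [hR, hw]
      ring
    rw [step1, Finset.mul_sum, ← Finset.sum_add_distrib]
    have hterm : ∀ a ∈ Finset.range d,
        (q ^ h * ((-1 : K) ^ a * (q ^ h) ^ a * T ((y + 1 + a) / d)) + w a)
        = w a - w (a + 1) := by
      intro a _
      have harg : (y + ((a : ℕ) + 1 : ℕ) : K) / d = (y + 1 + a) / d := by
        push_cast; ring_nf
      have hwsucc : w (a + 1) = (-1 : K) ^ (a + 1) * (q ^ h) ^ (a + 1) * T ((y + 1 + a) / d) := by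
        simp only [hw, harg]
      rw [hwsucc]
      simp only [hw]
      ring
    rw [Finset.sum_congr rfl hterm, Finset.sum_range_sub' w d]
    have hw0 : w 0 = T (y / d) := by simp [hw]
    have hwd : w d = -((q ^ d) ^ h * T (y / d + 1)) := by
      have harg : (y + (d : K)) / d = y / d + 1 := by field_simp
      simp only [hw, harg, hd.neg_one_pow, hpowdh]
      ring
    rw [hw0, hwd]
    have : T (y / d) - -((q ^ d) ^ h * T (y / d + 1)) = (q ^ d) ^ h * T (y / d + 1) + T (y / d) := by
      ring
    rw [this, feF (y / d), div_pow]
    field_simp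
  -- the polynomial
  set P : Polynomial K :=
    (∑ l ∈ Finset.range (k + 1), Polynomial.C ((k.choose l : K) * E l) * Polynomial.X ^ (k - l))
    - Polynomial.C ((d : K) ^ k) * ∑ a ∈ Finset.range d,
        Polynomial.C ((-1 : K) ^ a * (q ^ h) ^ a) *
        ∑ l ∈ Finset.range (k + 1), Polynomial.C ((k.choose l : K) * F l) *
          ((Polynomial.X + Polynomial.C (a : K)) * Polynomial.C ((d : K)⁻¹)) ^ (k - l) with hP
  have hEval : ∀ y : K, P.eval y = L y - R y := by
    intro y
    simp only [hP, Polynomial.eval_sub, Polynomial.eval_mul, Polynomial.eval_finset_sum,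
      Polynomial.eval_C, Polynomial.eval_pow, Polynomial.eval_add, Polynomial.eval_X]
    congr 1
    · exact Finset.sum_congr rfl fun l _ => by ring
    · simp only [hR, hT]
      congr 1
      apply Finset.sum_congr rfl
      intro a _
      congr 1
      apply Finset.sum_congr rfl
      intro l _
      rw [div_eq_mul_inv]
      ring
  have hfe : ∀ y : K, q ^ h * P.eval (y + 1) + P.eval y = 0 := by
    intro y
    rw [hEval, hEval]
    linear_combination feE y - feR y
  have hP0 : P = 0 := vanish_poly (q ^ h) hqh P hfe
  have hfin := hEval x
  rw [hP0, Polynomial.eval_zero] at hfin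
  have : L x = R x := sub_eq_zero.mp hfin.symm
  simpa only [hL, hR, hT] using this
end

section
/- Let p be an odd prime, h an integer, q ∈ ℤ_p with |q − 1|_p < 1, v ≥ 1 an integer, and z ∈ ℤ_p. Let (E_n^{(v)})_{n≥0} be the unique sequence in ℚ_p satisfying Σ_{j=0}^{v} C(v,j) q^{h j} Σ_{k=0}^{n} C(n,k) j^{n−k} E_k^{(v)} = 2^v · δ_{n,0} for all n ≥ 0, and set E_n^{(v)}(z) = Σ_{l=0}^{n} C(n,l) z^{n−l} E_l^{(v)}. Then for every n ≥ 0, the limit lim_{N→∞} Σ_{x_1=0}^{p^N−1} ⋯ Σ_{x_v=0}^{p^N−1} (−1)^{x_1+⋯+x_v} q^{h(x_1+⋯+x_v)} (z + x_1+⋯+x_v)^n exists in ℚ_p and equals E_n^{(v)}(z), the higher-order (h,q)-Euler polynomial at z. -/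
open Finset Filter Topology

namespace WittAux

variable {K : Type*} [CommRing K]

/-- v-fold sum over tuples. -/
def wittP (T : K) (v M : ℕ) (g : ℕ → K) : K :=
  ∑ x : Fin v → Fin M, T ^ (∑ j, (x j : ℕ)) * g (∑ j, (x j : ℕ))

/-- shift-difference operator. -/
def Lop (Q : K) (g : ℕ → K) : ℕ → K := fun x => Q * g (x + 1) + g x

lemma pascal_sum (v : ℕ) (a : ℕ → K) :
    ∑ j ∈ range (v + 2), (Nat.choose (v+1) j : K) * a j
      = (∑ j ∈ range (v + 1), (Nat.choose v j : K) * a (j+1))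
        + ∑ j ∈ range (v + 1), (Nat.choose v j : K) * a j := by
  rw [Finset.sum_range_succ' (fun j => ((v+1).choose j : K) * a j)]
  have h1 : ∀ j, (((v+1).choose (j+1) : ℕ) : K) = (v.choose j : K) + (v.choose (j+1) : K) := by
    intro j; rw [Nat.choose_succ_succ]; push_cast; ring
  calc (∑ j ∈ range (v + 1), ((v+1).choose (j+1) : K) * a (j+1)) + ((v+1).choose 0 : K) * a 0
      = (∑ j ∈ range (v + 1), ((v.choose j : K) * a (j+1) + (v.choose (j+1) : K) * a (j+1)))
          + a 0 := by
        simp only [h1, add_mul, Nat.choose_zero_right, Nat.cast_one, one_mul]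
    _ = (∑ j ∈ range (v + 1), (v.choose j : K) * a (j+1))
          + ((∑ j ∈ range (v + 1), (v.choose (j+1) : K) * a (j+1)) + a 0) := by
        rw [Finset.sum_add_distrib]; ring
    _ = (∑ j ∈ range (v + 1), (v.choose j : K) * a (j+1))
          + ∑ j ∈ range (v + 1), (v.choose j : K) * a j := by
        congr 1
        have : ∑ j ∈ range (v + 1), (v.choose (j+1) : K) * a (j+1)
            = ∑ j ∈ range v, (v.choose (j+1) : K) * a (j+1) := by
          rw [Finset.sum_range_succ, Nat.choose_succ_self]; simp
        have h0 : a 0 = (v.choose 0 : K) * a 0 := by simp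
        rw [this, h0, ← Finset.sum_range_succ' (fun j => (v.choose j : K) * a j)]

lemma iter_Lop (Q : K) : ∀ (v : ℕ) (g : ℕ → K) (x : ℕ),
    (Lop Q)^[v] g x = ∑ j ∈ range (v + 1), (v.choose j : K) * Q ^ j * g (x + j) := by
  intro v
  induction v with
  | zero => intro g x; simp
  | succ v ih =>
    intro g x
    rw [Function.iterate_succ_apply, ih (Lop Q g) x]
    have expand : ∀ j ∈ range (v+1), (v.choose j : K) * Q ^ j * (Lop Q g) (x + j)
        = (v.choose j : K) * (Q ^ (j+1) * g (x + (j+1))) + (v.choose j : K) * (Q ^ j * g (x + j)) := by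
      intro j _
      simp only [Lop]
      have : x + j + 1 = x + (j + 1) := by omega
      rw [this]; ring
    rw [Finset.sum_congr rfl expand, Finset.sum_add_distrib]
    simp only [mul_assoc]
    rw [pascal_sum v (fun j => Q ^ j * g (x + j))]

end WittAux

namespace WittAux
variable {K : Type*} [CommRing K]

lemma shift_iter (Q : K) (v : ℕ) (g : ℕ → K) (c : ℕ) :
    (fun s => ((Lop Q)^[v] g) (s + c)) = (Lop Q)^[v] (fun s => g (s + c)) := by
  funext s
  rw [iter_Lop, iter_Lop]
  apply Finset.sum_congr rfl
  intro j _
  have : s + c + j = s + j + c := by omega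
  rw [this]

lemma telescope {T Q : K} (hT : T = -Q) (M : ℕ) (g : ℕ → K) :
    ∑ a : Fin M, T ^ (a : ℕ) * (Lop Q g) (a : ℕ) = g 0 - T ^ M * g M := by
  rw [Fin.sum_univ_eq_sum_range (fun a => T ^ a * (Lop Q g) a) M]
  have h2 := Finset.sum_range_sub' (fun a => T ^ a * g a) M
  simp only [pow_zero, one_mul] at h2
  rw [← h2]
  apply Finset.sum_congr rfl
  intro a _
  simp only [Lop, pow_succ, hT]
  ring

lemma sum_succ (T : K) (v M : ℕ) (g : ℕ → K) :
    wittP T (v+1) M g = ∑ a : Fin M, T ^ (a : ℕ) * wittP T v M (fun s => g (s + (a : ℕ))) := by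
  rw [wittP]
  rw [← (Fin.consEquiv (fun _ : Fin (v+1) => Fin M)).sum_comp
    (fun y => T ^ (∑ j, (y j : ℕ)) * g (∑ j, (y j : ℕ)))]
  rw [Fintype.sum_prod_type]
  apply Finset.sum_congr rfl
  intro a _
  rw [wittP, Finset.mul_sum]
  apply Finset.sum_congr rfl
  intro x _
  have hsum : (∑ j, ((Fin.consEquiv (fun _ : Fin (v+1) => Fin M)) (a, x) j : ℕ))
      = (a : ℕ) + ∑ j, (x j : ℕ) := by
    simp only [Fin.consEquiv_apply]
    rw [show (fun j => ((Fin.cons a x : ∀ _ : Fin (v+1), Fin M) j : ℕ))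
      = Fin.cons (a : ℕ) (fun j => ((x j : ℕ))) from funext (Fin.cases rfl (fun i => rfl))] at *
    exact Fin.sum_cons (a : ℕ) _
  rw [hsum, pow_add, add_comm ((a : ℕ)) (∑ j, (x j : ℕ))]
  ring

end WittAux

namespace WittAux
variable {K : Type*} [CommRing K]

lemma key {T Q : K} (hT : T = -Q) (M : ℕ) : ∀ (v : ℕ) (g : ℕ → K),
    wittP T v M ((Lop Q)^[v] g)
      = ∑ j ∈ Finset.range (v + 1), ((v.choose j : K)) * (-(T ^ M)) ^ j * g (j * M) := by
  intro v
  induction v with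
  | zero =>
    intro g
    simp [wittP]
  | succ v ih =>
    intro g
    rw [sum_succ]
    have step1 : ∀ a : Fin M,
        (fun s => ((Lop Q)^[v+1] g) (s + (a : ℕ)))
          = (Lop Q)^[v] (fun s => (Lop Q g) (s + (a : ℕ))) := by
      intro a
      rw [Function.iterate_succ_apply, shift_iter]
    calc ∑ a : Fin M, T ^ (a:ℕ) * wittP T v M (fun s => ((Lop Q)^[v+1] g) (s + (a:ℕ)))
        = ∑ a : Fin M, T ^ (a:ℕ) *
            ∑ j ∈ Finset.range (v+1), (v.choose j : K) * (-(T ^ M)) ^ j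
              * (Lop Q g) (j * M + (a:ℕ)) := by
          apply Finset.sum_congr rfl
          intro a _
          rw [step1 a, ih]
      _ = ∑ j ∈ Finset.range (v+1), (v.choose j : K) * (-(T ^ M)) ^ j
            * ∑ a : Fin M, T ^ (a:ℕ) * (Lop Q g) (j * M + (a:ℕ)) := by
          simp only [Finset.mul_sum]
          rw [Finset.sum_comm]
          apply Finset.sum_congr rfl
          intro j _
          apply Finset.sum_congr rfl
          intro a _
          ring
      _ = ∑ j ∈ Finset.range (v+1), (v.choose j : K) * (-(T ^ M)) ^ j
            * (g (j * M) - T ^ M * g (j * M + M)) := by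
          apply Finset.sum_congr rfl
          intro j _
          congr 1
          have harg : ∀ a : Fin M, (Lop Q g) (j * M + (a:ℕ))
              = (Lop Q (fun s => g (j * M + s))) (a : ℕ) := by
            intro a
            simp only [Lop, add_assoc]
          rw [Finset.sum_congr rfl (fun a _ => by rw [harg a]), telescope hT M]
          norm_num
      _ = ∑ j ∈ Finset.range (v+1+1), ((v+1).choose j : K) * (-(T ^ M)) ^ j * g (j * M) := by
          simp only [mul_assoc]
          rw [show (v+1+1) = v + 2 from rfl,
            pascal_sum v (fun j => (-(T ^ M)) ^ j * g (j * M)),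
            ← Finset.sum_add_distrib]
          apply Finset.sum_congr rfl
          intro j _
          have hjm : (j+1) * M = j * M + M := by ring
          rw [hjm, pow_succ]
          ring

end WittAux
namespace WittAux
variable {p : ℕ} [hp : Fact p.Prime]

lemma norm_nat_le_one (n : ℕ) : ‖(n : ℚ_[p])‖ ≤ 1 := by
  have := Padic.norm_int_le_one (p := p) n
  push_cast at this
  exact this

lemma norm_pow_sub_one_le {u : ℚ_[p]} (hu : ‖u‖ ≤ 1) (m : ℕ) : ‖u ^ m - 1‖ ≤ ‖u - 1‖ := by
  calc ‖u ^ m - 1‖ = ‖∑ i ∈ range m, u ^ i‖ * ‖u - 1‖ := by rw [← norm_mul, geom_sum_mul]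
    _ ≤ 1 * ‖u - 1‖ := by
        gcongr
        refine IsUltrametricDist.norm_sum_le_of_forall_le_of_nonneg zero_le_one ?_
        intro i _
        rw [norm_pow]
        exact pow_le_one₀ (norm_nonneg u) hu
    _ = ‖u - 1‖ := one_mul _

lemma norm_pow_sub_pow_le {a b : ℚ_[p]} (ha : ‖a‖ ≤ 1) (hb : ‖b‖ ≤ 1) (k : ℕ) :
    ‖a ^ k - b ^ k‖ ≤ ‖a - b‖ := by
  calc ‖a ^ k - b ^ k‖ = ‖∑ i ∈ range k, a ^ i * b ^ (k - 1 - i)‖ * ‖a - b‖ := by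
        rw [← norm_mul, geom_sum₂_mul]
    _ ≤ 1 * ‖a - b‖ := by
        gcongr
        refine IsUltrametricDist.norm_sum_le_of_forall_le_of_nonneg zero_le_one ?_
        intro i _
        rw [norm_mul, norm_pow, norm_pow]
        exact mul_le_one₀ (pow_le_one₀ (norm_nonneg a) ha) (by positivity)
          (pow_le_one₀ (norm_nonneg b) hb)
    _ = ‖a - b‖ := one_mul _

lemma norm_eq_one_of_near_one {u : ℚ_[p]} (hu : ‖u - 1‖ < 1) : ‖u‖ = 1 := by
  have h1 : u = 1 + (u - 1) := by ring
  rw [h1, Padic.add_eq_max_of_ne (by rw [norm_one]; exact (ne_of_lt hu).symm)]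
  rw [norm_one]
  exact max_eq_left hu.le

lemma norm_zpow_sub_one_le {u : ℚ_[p]} (hu : ‖u - 1‖ < 1) (h : ℤ) :
    ‖u ^ h - 1‖ ≤ ‖u - 1‖ := by
  have h1 : ‖u‖ = 1 := norm_eq_one_of_near_one hu
  obtain ⟨m, rfl | rfl⟩ := h.eq_nat_or_neg
  · rw [zpow_natCast]; exact norm_pow_sub_one_le h1.le m
  · have hne : u ^ m ≠ 0 := by
      apply pow_ne_zero
      intro hz
      rw [hz] at h1
      simp at h1
    have key : u ^ (-(m : ℤ)) - 1 = (u ^ m)⁻¹ * (1 - u ^ m) := by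
      rw [zpow_neg, zpow_natCast]
      field_simp
    rw [key, norm_mul, norm_inv, norm_pow, h1, one_pow, inv_one, one_mul, norm_sub_rev]
    exact norm_pow_sub_one_le h1.le m

lemma decay {u : ℚ_[p]} (hu : ‖u - 1‖ < 1) (N : ℕ) :
    ‖u ^ (p ^ N) - 1‖ ≤ ‖u - 1‖ * (max (p : ℝ)⁻¹ ‖u - 1‖) ^ N := by
  have h1 : ‖u‖ = 1 := norm_eq_one_of_near_one hu
  set r := ‖u - 1‖ with hr
  set c := max (p : ℝ)⁻¹ r with hc
  have hrc : r ≤ c := le_max_right _ _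
  induction N with
  | zero => simp [hr]
  | succ N ih =>
    have hw : ‖u ^ (p ^ N)‖ = 1 := by rw [norm_pow, h1, one_pow]
    set w := u ^ (p ^ N) with hwdef
    have hwr : ‖w - 1‖ ≤ r * c ^ N := ih
    have hc0 : (0:ℝ) ≤ c := le_trans (by positivity) (le_max_left _ _)
    have hc1 : c ≤ 1 := max_le (by
        rw [inv_le_one_iff₀]
        right
        exact_mod_cast hp.out.one_le) hu.le
    have hrcN : r * c ^ N ≤ r := by
      exact mul_le_of_le_one_right (norm_nonneg _) (pow_le_one₀ hc0 hc1)
    have hsum : ‖∑ i ∈ range p, w ^ i‖ ≤ c := by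
      have hrw : (∑ i ∈ range p, w ^ i) = (∑ i ∈ range p, (w ^ i - 1)) + p := by
        rw [Finset.sum_sub_distrib]
        simp
      rw [hrw]
      refine le_trans (Padic.nonarchimedean _ _) (max_le ?_ ?_)
      · refine IsUltrametricDist.norm_sum_le_of_forall_le_of_nonneg hc0 ?_
        intro i _
        exact le_trans (norm_pow_sub_one_le hw.le i) (le_trans (hwr.trans hrcN) hrc)
      · rw [Padic.norm_p]
        exact le_max_left _ _
    have heq : u ^ p ^ (N+1) - 1 = (∑ i ∈ range p, w ^ i) * (w - 1) := by
      rw [geom_sum_mul, hwdef, ← pow_mul, ← pow_succ]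
    rw [heq, norm_mul, pow_succ]
    calc ‖∑ i ∈ range p, w ^ i‖ * ‖w - 1‖ ≤ c * (r * c ^ N) :=
          mul_le_mul hsum hwr (norm_nonneg _) hc0
      _ = r * (c ^ N * c) := by ring

end WittAux

namespace WittAux

lemma sum_neg_one {p : ℕ} [Fact p.Prime] {m : ℕ} (hm : Odd m) :
    (∑ i ∈ range m, (-1 : ℚ_[p]) ^ i) = 1 := by
  have h := geom_sum_mul (-1 : ℚ_[p]) m
  rw [hm.neg_one_pow] at h
  have h2 : (-1 : ℚ_[p]) - 1 = -2 := by norm_num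
  rw [h2] at h
  have h3 : (∑ i ∈ range m, (-1 : ℚ_[p]) ^ i) * (-2) = 1 * (-2) := by rw [h]; norm_num
  exact mul_right_cancel₀ (by norm_num) h3

lemma sign_sum {p : ℕ} [Fact p.Prime] (v : ℕ) {m : ℕ} (hm : Odd m) :
    ∑ i : Fin v → Fin m, (-1 : ℚ_[p]) ^ (∑ j, (i j : ℕ)) = 1 := by
  have h1 : ∀ i : Fin v → Fin m, (-1 : ℚ_[p]) ^ (∑ j, (i j : ℕ))
      = ∏ j, (-1 : ℚ_[p]) ^ (i j : ℕ) := fun i => (Finset.prod_pow_eq_pow_sum _ _ _).symm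
  rw [Finset.sum_congr rfl fun i _ => h1 i]
  rw [← Fintype.prod_sum (fun (_ : Fin v) (a : Fin m) => (-1 : ℚ_[p]) ^ (a : ℕ))]
  have h2 : ∀ j : Fin v, (∑ a : Fin m, (-1 : ℚ_[p]) ^ (a : ℕ)) = 1 := by
    intro j
    rw [Fin.sum_univ_eq_sum_range (fun a => (-1 : ℚ_[p]) ^ a) m]
    exact sum_neg_one hm
  rw [Finset.prod_congr rfl fun j _ => h2 j, Finset.prod_const_one]

end WittAux

namespace WittAux

lemma wittP_split {K : Type*} [CommRing K] (T : K) (v m M : ℕ) (g : ℕ → K) :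
    wittP T v (m * M) g = ∑ i : Fin v → Fin m, ∑ y : Fin v → Fin M,
      T ^ ((∑ j, (y j : ℕ)) + M * ∑ j, (i j : ℕ)) * g ((∑ j, (y j : ℕ)) + M * ∑ j, (i j : ℕ)) := by
  rw [wittP]
  rw [← ((Equiv.arrowProdEquivProdArrow (Fin v) (fun _ => Fin m) (fun _ => Fin M)).symm.trans
      (Equiv.arrowCongr (Equiv.refl (Fin v)) finProdFinEquiv)).sum_comp
      (fun x : Fin v → Fin (m * M) => T ^ (∑ j, (x j : ℕ)) * g (∑ j, (x j : ℕ)))]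
  rw [Fintype.sum_prod_type]
  apply Finset.sum_congr rfl
  intro i _
  apply Finset.sum_congr rfl
  intro y _
  have hval : (∑ j, (((((Equiv.arrowProdEquivProdArrow (Fin v) (fun _ => Fin m) (fun _ => Fin M)).symm.trans
      (Equiv.arrowCongr (Equiv.refl (Fin v)) finProdFinEquiv)) (i, y)) j : ℕ)))
      = (∑ j, (y j : ℕ)) + M * ∑ j, (i j : ℕ) := by
    have hterm : ∀ j : Fin v, ((((Equiv.arrowProdEquivProdArrow (Fin v) (fun _ => Fin m) (fun _ => Fin M)).symm.trans
        (Equiv.arrowCongr (Equiv.refl (Fin v)) finProdFinEquiv)) (i, y)) j : ℕ)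
        = (y j : ℕ) + M * (i j : ℕ) := by
      intro j
      simp [Equiv.arrowProdEquivProdArrow, finProdFinEquiv]
    rw [Finset.sum_congr rfl fun j _ => hterm j, Finset.sum_add_distrib, ← Finset.mul_sum]
  rw [hval]

end WittAux

namespace WittAux
variable {p : ℕ} [hp : Fact p.Prime]

lemma diff_bound (hodd : Odd p) {Q : ℚ_[p]} (hQ : ‖Q - 1‖ < 1) (v k N : ℕ) :
    ‖wittP (-Q) v (p ^ (N+1)) (fun s => (s : ℚ_[p]) ^ k)
      - wittP (-Q) v (p ^ N) (fun s => (s : ℚ_[p]) ^ k)‖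
      ≤ (max (p : ℝ)⁻¹ ‖Q - 1‖) ^ N := by
  set r := ‖Q - 1‖ with hrdef
  set c := max (p : ℝ)⁻¹ r with hcdef
  have hQ1 : ‖Q‖ = 1 := norm_eq_one_of_near_one hQ
  have hc0 : (0:ℝ) ≤ c := le_trans (by positivity) (le_max_left _ _)
  have hcN : (0:ℝ) ≤ c ^ N := pow_nonneg hc0 N
  set M := p ^ N with hM
  have hModd : Odd M := hodd.pow
  have hsplit : wittP (-Q) v (p ^ (N+1)) (fun s => (s : ℚ_[p]) ^ k)
      = ∑ i : Fin v → Fin p, ∑ y : Fin v → Fin M,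
        (-Q) ^ ((∑ j, (y j : ℕ)) + M * ∑ j, (i j : ℕ))
          * ((((∑ j, (y j : ℕ)) + M * ∑ j, (i j : ℕ) : ℕ)) : ℚ_[p]) ^ k := by
    rw [pow_succ']
    exact wittP_split (-Q) v p M _
  have hbase : wittP (-Q) v M (fun s => (s : ℚ_[p]) ^ k)
      = ∑ i : Fin v → Fin p, ∑ y : Fin v → Fin M,
        (-1 : ℚ_[p]) ^ (∑ j, (i j : ℕ)) *
          ((-Q) ^ (∑ j, (y j : ℕ)) * (((∑ j, (y j : ℕ) : ℕ)) : ℚ_[p]) ^ k) := by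
    calc wittP (-Q) v M (fun s => (s : ℚ_[p]) ^ k)
        = 1 * wittP (-Q) v M (fun s => (s : ℚ_[p]) ^ k) := (one_mul _).symm
      _ = (∑ i : Fin v → Fin p, (-1 : ℚ_[p]) ^ (∑ j, (i j : ℕ)))
            * (∑ y : Fin v → Fin M, (-Q) ^ (∑ j, (y j : ℕ))
                * (((∑ j, (y j : ℕ) : ℕ)) : ℚ_[p]) ^ k) := by
          rw [sign_sum v hodd, wittP]
      _ = _ := Finset.sum_mul_sum _ _ _ _
  rw [hsplit, hbase]
  rw [← Finset.sum_sub_distrib]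
  refine IsUltrametricDist.norm_sum_le_of_forall_le_of_nonneg hcN ?_
  intro i _
  rw [← Finset.sum_sub_distrib]
  refine IsUltrametricDist.norm_sum_le_of_forall_le_of_nonneg hcN ?_
  intro y _
  set s := ∑ j, (y j : ℕ) with hs
  set t := ∑ j, (i j : ℕ) with ht
  have hfact : (-Q) ^ (s + M * t)
      = (-1 : ℚ_[p]) ^ t * ((-Q) ^ s * Q ^ (M * t)) := by
    rw [pow_add, neg_pow Q (M * t), pow_mul (-1 : ℚ_[p]) M t, hModd.neg_one_pow]
    ring
  have hdiff : (-Q) ^ (s + M * t) * (((s + M * t : ℕ)) : ℚ_[p]) ^ k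
      - (-1 : ℚ_[p]) ^ t * ((-Q) ^ s * ((s : ℕ) : ℚ_[p]) ^ k)
      = (-1 : ℚ_[p]) ^ t * (-Q) ^ s *
        ((Q ^ (M * t) - 1) * (((s + M * t : ℕ)) : ℚ_[p]) ^ k
          + ((((s + M * t : ℕ)) : ℚ_[p]) ^ k - ((s : ℕ) : ℚ_[p]) ^ k)) := by
    rw [hfact]
    ring
  rw [hdiff, norm_mul, norm_mul, norm_pow, norm_pow, norm_neg, norm_neg, norm_one, hQ1,
    one_pow, one_pow, one_mul, one_mul]
  refine le_trans (Padic.nonarchimedean _ _) (max_le ?_ ?_)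
  · rw [norm_mul]
    have h1 : ‖Q ^ (M * t) - 1‖ ≤ c ^ N := by
      rw [pow_mul]
      refine le_trans (norm_pow_sub_one_le (by rw [norm_pow, hQ1, one_pow]) t) ?_
      refine le_trans (decay hQ N) ?_
      exact mul_le_of_le_one_left hcN hQ.le
    have h2 : ‖(((s + M * t : ℕ)) : ℚ_[p]) ^ k‖ ≤ 1 := by
      rw [norm_pow]
      exact pow_le_one₀ (norm_nonneg _) (norm_nat_le_one _)
    calc ‖Q ^ (M * t) - 1‖ * ‖(((s + M * t : ℕ)) : ℚ_[p]) ^ k‖ ≤ c ^ N * 1 :=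
          mul_le_mul h1 h2 (norm_nonneg _) hcN
      _ = c ^ N := mul_one _
  · refine le_trans (norm_pow_sub_pow_le (norm_nat_le_one _) (norm_nat_le_one _) k) ?_
    have hcast : (((s + M * t : ℕ)) : ℚ_[p]) - ((s : ℕ) : ℚ_[p])
        = ((M : ℕ) : ℚ_[p]) * ((t : ℕ) : ℚ_[p]) := by push_cast; ring
    rw [hcast, norm_mul]
    have hMn : ‖((M : ℕ) : ℚ_[p])‖ = ((p : ℝ)⁻¹) ^ N := by
      rw [hM]
      push_cast
      rw [norm_pow, Padic.norm_p]
    calc ‖((M : ℕ) : ℚ_[p])‖ * ‖((t : ℕ) : ℚ_[p])‖ ≤ ((p : ℝ)⁻¹) ^ N * 1 := by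
          rw [hMn]
          exact mul_le_mul_of_nonneg_left (norm_nat_le_one _) (by positivity)
      _ = ((p : ℝ)⁻¹) ^ N := mul_one _
      _ ≤ c ^ N := pow_le_pow_left₀ (by positivity) (le_max_left _ _) N

end WittAux

namespace WittAux

lemma expand_wittP {K : Type*} [CommRing K] (T Q : K) (v M : ℕ) (g : ℕ → K) :
    wittP T v M ((Lop Q)^[v] g)
      = ∑ j ∈ Finset.range (v+1), (v.choose j : K) * Q ^ j
          * wittP T v M (fun s => g (s + j)) := by
  simp only [wittP]
  have hterm : ∀ x : Fin v → Fin M,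
      T ^ (∑ j, (x j : ℕ)) * ((Lop Q)^[v] g (∑ j, (x j : ℕ)))
      = ∑ j ∈ Finset.range (v+1), (v.choose j : K) * Q ^ j
          * (T ^ (∑ i, (x i : ℕ)) * g ((∑ i, (x i : ℕ)) + j)) := by
    intro x
    rw [iter_Lop, Finset.mul_sum]
    exact Finset.sum_congr rfl fun j _ => by ring
  rw [Finset.sum_congr rfl fun x _ => hterm x, Finset.sum_comm]
  exact Finset.sum_congr rfl fun j _ => by rw [Finset.mul_sum]

variable {p : ℕ} [hp : Fact p.Prime]

lemma exists_lim (hodd : Odd p) {Q : ℚ_[p]} (hQ : ‖Q - 1‖ < 1) (v k : ℕ) :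
    ∃ L : ℚ_[p], Tendsto (fun N => wittP (-Q) v (p ^ N) (fun s => (s : ℚ_[p]) ^ k))
      atTop (𝓝 L) := by
  have hc1 : max (p : ℝ)⁻¹ ‖Q - 1‖ < 1 := by
    apply max_lt _ hQ
    rw [inv_lt_one_iff₀]
    right
    exact_mod_cast hp.out.one_lt
  have hcauchy : CauchySeq (fun N => wittP (-Q) v (p ^ N) (fun s => (s : ℚ_[p]) ^ k)) := by
    apply cauchySeq_of_le_geometric (max (p : ℝ)⁻¹ ‖Q - 1‖) 1 hc1
    intro n
    rw [dist_eq_norm, norm_sub_rev, one_mul]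
    exact diff_bound hodd hQ v k n
  exact cauchySeq_tendsto_of_complete hcauchy

end WittAux

namespace WittAux

lemma shift_expand {K : Type*} [CommRing K] (T : K) (v M n j : ℕ) :
    wittP T v M (fun s => ((s + j : ℕ) : K) ^ n)
      = ∑ k ∈ Finset.range (n+1), (n.choose k : K) * (j : K) ^ (n-k)
          * wittP T v M (fun s => (s : K) ^ k) := by
  simp only [wittP]
  have hterm : ∀ x : Fin v → Fin M,
      T ^ (∑ i, (x i : ℕ)) * (((∑ i, (x i : ℕ)) + j : ℕ) : K) ^ n
      = ∑ k ∈ Finset.range (n+1), (n.choose k : K) * (j : K) ^ (n-k)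
          * (T ^ (∑ i, (x i : ℕ)) * ((∑ i, (x i : ℕ) : ℕ) : K) ^ k) := by
    intro x
    have hcast : (((∑ i, (x i : ℕ)) + j : ℕ) : K)
        = ((∑ i, (x i : ℕ) : ℕ) : K) + (j : K) := by push_cast; ring
    rw [hcast, add_pow, Finset.mul_sum]
    exact Finset.sum_congr rfl fun k _ => by ring
  rw [Finset.sum_congr rfl fun x _ => hterm x, Finset.sum_comm]
  exact Finset.sum_congr rfl fun k _ => by rw [Finset.mul_sum]

lemma finite_identity {K : Type*} [CommRing K] (Q : K) (v M n : ℕ) (hModd : Odd M) :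
    ∑ j ∈ Finset.range (v+1), (v.choose j : K) * Q ^ j
      * ∑ k ∈ Finset.range (n+1), (n.choose k : K) * (j : K) ^ (n-k)
          * wittP (-Q) v M (fun s => (s : K) ^ k)
    = ∑ j ∈ Finset.range (v+1), (v.choose j : K) * (Q ^ M) ^ j * ((j * M : ℕ) : K) ^ n := by
  have hT : (-Q : K) = -Q := rfl
  have hkey := key hT M v (fun s => ((s : ℕ) : K) ^ n)
  rw [expand_wittP] at hkey
  have hneg : -((-Q : K) ^ M) = Q ^ M := by
    rw [hModd.neg_pow]
    ring
  rw [hneg] at hkey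
  calc ∑ j ∈ Finset.range (v+1), (v.choose j : K) * Q ^ j
        * ∑ k ∈ Finset.range (n+1), (n.choose k : K) * (j : K) ^ (n-k)
            * wittP (-Q) v M (fun s => (s : K) ^ k)
      = ∑ j ∈ Finset.range (v+1), (v.choose j : K) * Q ^ j
          * wittP (-Q) v M (fun s => ((s + j : ℕ) : K) ^ n) := by
        exact Finset.sum_congr rfl fun j _ => by rw [shift_expand]
    _ = _ := hkey

end WittAux

open Finset Filter in
/-- Witt's formula for the higher-order `(h,q)`-Euler polynomials: for an odd prime `p`,
`h : ℤ`, `q ∈ ℤ_[p]` with `‖q - 1‖ < 1`, `v ≥ 1` and `z ∈ ℤ_[p]`, with `E` the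
higher-order `(h,q)`-Euler numbers (determined by
`Σ_{j≤v} C(v,j) q^{hj} Σ_{k≤n} C(n,k) j^{n-k} E_k = 2^v δ_{n,0}`) and
`E_n(z) = Σ_{l≤n} C(n,l) z^{n-l} E_l`, the `v`-fold fermionic `p`-adic integral
`lim_N Σ_{x₁,…,x_v < p^N} (-1)^{Σxⱼ} q^{h Σxⱼ} (z + Σxⱼ)^n` equals `E_n(z)`. -/
theorem witt_formula_higher_order_hq_euler_polynomials (p : ℕ) [Fact p.Prime] (hp : Odd p)
    (h : ℤ) (q : ℤ_[p]) (hq : ‖q - 1‖ < 1) (v : ℕ) (hv : 1 ≤ v) (z : ℤ_[p]) (E : ℕ → ℚ_[p])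
    (hE : ∀ n : ℕ,
      (∑ j ∈ Finset.range (v + 1), (v.choose j : ℚ_[p]) * ((q : ℚ_[p]) ^ h) ^ j *
        ∑ k ∈ Finset.range (n + 1), (n.choose k : ℚ_[p]) * (j : ℚ_[p]) ^ (n - k) * E k)
        = 2 ^ v * if n = 0 then 1 else 0) :
    ∀ n : ℕ, Filter.Tendsto
      (fun N : ℕ => ∑ x : Fin v → Fin (p ^ N),
        (-1 : ℚ_[p]) ^ (∑ j, (x j : ℕ)) * ((q : ℚ_[p]) ^ h) ^ (∑ j, (x j : ℕ)) *
          ((z : ℚ_[p]) + ((∑ j, (x j : ℕ) : ℕ) : ℚ_[p])) ^ n)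
      Filter.atTop
      (nhds (∑ l ∈ Finset.range (n + 1),
        (n.choose l : ℚ_[p]) * (z : ℚ_[p]) ^ (n - l) * E l)) := by
  classical
  set Q : ℚ_[p] := (q : ℚ_[p]) ^ h with hQdef
  have hq' : ‖(q : ℚ_[p]) - 1‖ < 1 := by
    have hcast : ((q - 1 : ℤ_[p]) : ℚ_[p]) = (q : ℚ_[p]) - 1 := by push_cast; ring
    rw [← hcast, PadicInt.padic_norm_e_of_padicInt]
    exact hq
  have hQ : ‖Q - 1‖ < 1 := lt_of_le_of_lt (WittAux.norm_zpow_sub_one_le hq' h) hq'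
  choose L hL using fun k => WittAux.exists_lim hp hQ v k
  have hplt : (p : ℝ)⁻¹ < 1 := by
    rw [inv_lt_one_iff₀]
    right
    exact_mod_cast (Fact.out : p.Prime).one_lt
  have hc1 : max (p : ℝ)⁻¹ ‖Q - 1‖ < 1 := max_lt hplt hQ
  have hc0 : (0:ℝ) ≤ max (p : ℝ)⁻¹ ‖Q - 1‖ := le_trans (by positivity) (le_max_left _ _)
  have hQpow : Filter.Tendsto (fun N => Q ^ (p ^ N)) Filter.atTop (nhds 1) := by
    rw [← tendsto_sub_nhds_zero_iff]
    apply squeeze_zero_norm (fun N => WittAux.decay hQ N)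
    have := (tendsto_pow_atTop_nhds_zero_of_lt_one hc0 hc1).const_mul (‖Q - 1‖)
    simpa using this
  have hpN : Filter.Tendsto (fun N => ((p ^ N : ℕ) : ℚ_[p])) Filter.atTop (nhds 0) := by
    have hb : ∀ N : ℕ, ‖((p ^ N : ℕ) : ℚ_[p])‖ ≤ ((p:ℝ)⁻¹) ^ N := by
      intro N
      push_cast
      rw [norm_pow, Padic.norm_p]
    exact squeeze_zero_norm hb (tendsto_pow_atTop_nhds_zero_of_lt_one (by positivity) hplt)
  have EqL : ∀ n : ℕ,
      (∑ j ∈ Finset.range (v + 1), (v.choose j : ℚ_[p]) * Q ^ j *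
        ∑ k ∈ Finset.range (n + 1), (n.choose k : ℚ_[p]) * (j : ℚ_[p]) ^ (n - k) * L k)
      = 2 ^ v * if n = 0 then 1 else 0 := by
    intro n
    have hLHS : Filter.Tendsto (fun N => ∑ j ∈ Finset.range (v + 1),
        (v.choose j : ℚ_[p]) * Q ^ j *
        ∑ k ∈ Finset.range (n + 1), (n.choose k : ℚ_[p]) * (j : ℚ_[p]) ^ (n - k)
          * WittAux.wittP (-Q) v (p ^ N) (fun s => (s : ℚ_[p]) ^ k)) Filter.atTop
        (nhds (∑ j ∈ Finset.range (v + 1), (v.choose j : ℚ_[p]) * Q ^ j *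
          ∑ k ∈ Finset.range (n + 1), (n.choose k : ℚ_[p]) * (j : ℚ_[p]) ^ (n - k) * L k)) := by
      apply tendsto_finset_sum
      intro j _
      apply Filter.Tendsto.const_mul
      apply tendsto_finset_sum
      intro k _
      exact (hL k).const_mul _
    have hID : ∀ N : ℕ, (∑ j ∈ Finset.range (v + 1), (v.choose j : ℚ_[p]) * Q ^ j *
        ∑ k ∈ Finset.range (n + 1), (n.choose k : ℚ_[p]) * (j : ℚ_[p]) ^ (n - k)
          * WittAux.wittP (-Q) v (p ^ N) (fun s => (s : ℚ_[p]) ^ k))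
        = ∑ j ∈ Finset.range (v + 1), (v.choose j : ℚ_[p]) * (Q ^ (p ^ N)) ^ j
            * ((j * p ^ N : ℕ) : ℚ_[p]) ^ n := by
      intro N
      exact WittAux.finite_identity Q v (p ^ N) n hp.pow
    have hRHS : Filter.Tendsto (fun N => ∑ j ∈ Finset.range (v + 1),
        (v.choose j : ℚ_[p]) * (Q ^ (p ^ N)) ^ j * ((j * p ^ N : ℕ) : ℚ_[p]) ^ n)
        Filter.atTop (nhds (2 ^ v * if n = 0 then 1 else 0)) := by
      cases n with
      | zero =>
        have hif : (2:ℚ_[p]) ^ v * (if (0:ℕ) = 0 then 1 else 0) = 2 ^ v := by simp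
        rw [hif]
        simp only [pow_zero, mul_one]
        have htends : Filter.Tendsto (fun N => ∑ j ∈ Finset.range (v + 1),
            (v.choose j : ℚ_[p]) * (Q ^ (p ^ N)) ^ j) Filter.atTop
            (nhds (∑ j ∈ Finset.range (v + 1), (v.choose j : ℚ_[p]) * (1:ℚ_[p]) ^ j)) := by
          apply tendsto_finset_sum
          intro j _
          exact (hQpow.pow j).const_mul _
        have hval : (∑ j ∈ Finset.range (v + 1), (v.choose j : ℚ_[p]) * (1:ℚ_[p]) ^ j)
            = 2 ^ v := by
          simp only [one_pow, mul_one]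
          rw [← Nat.cast_sum]
          rw [Nat.sum_range_choose]
          push_cast
          ring
        rwa [hval] at htends
      | succ m =>
        have hif : (2:ℚ_[p]) ^ v * (if m + 1 = 0 then 1 else 0) = 0 := by simp
        rw [hif]
        have htends : Filter.Tendsto (fun N => ∑ j ∈ Finset.range (v + 1),
            (v.choose j : ℚ_[p]) * (Q ^ (p ^ N)) ^ j * ((j * p ^ N : ℕ) : ℚ_[p]) ^ (m+1))
            Filter.atTop
            (nhds (∑ j ∈ Finset.range (v + 1),
              (v.choose j : ℚ_[p]) * (1:ℚ_[p]) ^ j * ((j : ℚ_[p]) * 0) ^ (m+1))) := by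
          apply tendsto_finset_sum
          intro j _
          have hcst : ∀ N : ℕ, ((j * p ^ N : ℕ) : ℚ_[p]) = (j : ℚ_[p]) * ((p ^ N : ℕ) : ℚ_[p]) := by
            intro N
            push_cast
            ring
          refine Filter.Tendsto.mul (((hQpow.pow j).const_mul _)) ?_
          refine Filter.Tendsto.pow ?_ (m+1)
          rw [show (fun N => ((j * p ^ N : ℕ) : ℚ_[p])) = fun N => (j : ℚ_[p]) * ((p ^ N : ℕ) : ℚ_[p]) from funext hcst]
          exact hpN.const_mul _
        have hval : (∑ j ∈ Finset.range (v + 1),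
            (v.choose j : ℚ_[p]) * (1:ℚ_[p]) ^ j * ((j : ℚ_[p]) * 0) ^ (m+1)) = 0 := by
          simp
        rwa [hval] at htends
    exact tendsto_nhds_unique (hLHS.congr hID) hRHS
  have hLE : ∀ n, L n = E n := by
    intro n
    induction n using Nat.strong_induction_on with
    | _ n ih =>
    have e1 := EqL n
    have e2 := hE n
    have hdiff : (∑ j ∈ Finset.range (v+1), (v.choose j : ℚ_[p]) * Q ^ j) * (L n - E n) = 0 := by
      rw [Finset.sum_mul]
      have hsplit : ∀ j ∈ Finset.range (v+1), (v.choose j : ℚ_[p]) * Q ^ j * (L n - E n)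
          = (v.choose j : ℚ_[p]) * Q ^ j *
              (∑ k ∈ Finset.range (n+1), (n.choose k : ℚ_[p]) * (j : ℚ_[p]) ^ (n-k) * L k)
            - (v.choose j : ℚ_[p]) * Q ^ j *
              (∑ k ∈ Finset.range (n+1), (n.choose k : ℚ_[p]) * (j : ℚ_[p]) ^ (n-k) * E k) := by
        intro j _
        have hinner : (∑ k ∈ Finset.range (n+1), (n.choose k : ℚ_[p]) * (j : ℚ_[p]) ^ (n-k) * L k)
            - (∑ k ∈ Finset.range (n+1), (n.choose k : ℚ_[p]) * (j : ℚ_[p]) ^ (n-k) * E k)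
            = L n - E n := by
          rw [← Finset.sum_sub_distrib, Finset.sum_range_succ]
          have hz : ∀ k ∈ Finset.range n, (n.choose k : ℚ_[p]) * (j:ℚ_[p])^(n-k) * L k
              - (n.choose k : ℚ_[p]) * (j:ℚ_[p])^(n-k) * E k = 0 := by
            intro k hk
            rw [ih k (Finset.mem_range.mp hk)]
            ring
          rw [Finset.sum_congr rfl hz, Finset.sum_const_zero, zero_add, Nat.choose_self,
            Nat.sub_self, pow_zero, Nat.cast_one]
          ring
        rw [← hinner]
        ring
      rw [Finset.sum_congr rfl hsplit, Finset.sum_sub_distrib, e1, e2, sub_self]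
    have hsum : (∑ j ∈ Finset.range (v+1), (v.choose j : ℚ_[p]) * Q ^ j) = (1 + Q) ^ v := by
      rw [add_comm (1 : ℚ_[p]) Q, add_pow]
      exact Finset.sum_congr rfl fun j _ => by rw [one_pow]; ring
    have hone_add : (1 + Q : ℚ_[p]) ≠ 0 := by
      have h2 : ‖(2 : ℚ_[p])‖ = 1 := by
        have hle := Padic.norm_int_le_one (p := p) 2
        rcases lt_or_eq_of_le hle with hlt | heq
        · exfalso
          rw [Padic.norm_intCast_lt_one_iff] at hlt
          have hpd : p ∣ 2 := by exact_mod_cast hlt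
          have hple : p ≤ 2 := Nat.le_of_dvd (by norm_num) hpd
          have h2le : 2 ≤ p := (Fact.out : p.Prime).two_le
          have hp2 : p = 2 := le_antisymm hple h2le
          rw [hp2] at hp
          exact (Nat.not_odd_iff_even.mpr (by norm_num)) hp
        · rw [← heq]
          norm_num
      have hnorm : ‖(1 + Q : ℚ_[p])‖ = 1 := by
        have hco : (1 : ℚ_[p]) + Q = 2 + (Q - 1) := by ring
        rw [hco, Padic.add_eq_max_of_ne (by rw [h2]; exact (ne_of_lt hQ).symm), h2]
        exact max_eq_left hQ.le
      intro hzero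
      rw [hzero] at hnorm
      simp at hnorm
    rw [hsum] at hdiff
    rcases mul_eq_zero.mp hdiff with hbad | hgood
    · exact absurd hbad (pow_ne_zero v hone_add)
    · exact sub_eq_zero.mp hgood
  intro n
  have hfun : ∀ N : ℕ, (∑ x : Fin v → Fin (p ^ N),
      (-1 : ℚ_[p]) ^ (∑ j, (x j : ℕ)) * Q ^ (∑ j, (x j : ℕ)) *
        ((z : ℚ_[p]) + ((∑ j, (x j : ℕ) : ℕ) : ℚ_[p])) ^ n)
      = ∑ l ∈ Finset.range (n+1), (n.choose l : ℚ_[p]) * (z:ℚ_[p])^(n-l)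
          * WittAux.wittP (-Q) v (p^N) (fun s => (s:ℚ_[p])^l) := by
    intro N
    simp only [WittAux.wittP]
    have hterm : ∀ x : Fin v → Fin (p^N),
        (-1:ℚ_[p])^(∑ j, (x j :ℕ)) * Q^(∑ j, (x j:ℕ)) *
          ((z:ℚ_[p]) + ((∑ j, (x j:ℕ) : ℕ):ℚ_[p]))^n
        = ∑ l ∈ Finset.range (n+1), (n.choose l : ℚ_[p]) * (z:ℚ_[p])^(n-l)
            * ((-Q)^(∑ j,(x j:ℕ)) * ((∑ j,(x j:ℕ) : ℕ):ℚ_[p])^l) := by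
      intro x
      rw [← neg_pow, add_comm ((z:ℚ_[p])) _, add_pow, Finset.mul_sum]
      exact Finset.sum_congr rfl fun l _ => by ring
    rw [Finset.sum_congr rfl (fun x _ => hterm x), Finset.sum_comm]
    exact Finset.sum_congr rfl fun l _ => by rw [Finset.mul_sum]
  have htends : Filter.Tendsto (fun N => ∑ l ∈ Finset.range (n+1),
      (n.choose l : ℚ_[p]) * (z:ℚ_[p])^(n-l)
        * WittAux.wittP (-Q) v (p^N) (fun s => (s:ℚ_[p])^l)) Filter.atTop
      (nhds (∑ l ∈ Finset.range (n+1), (n.choose l : ℚ_[p]) * (z:ℚ_[p])^(n-l) * L l)) := by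
    apply tendsto_finset_sum
    intro l _
    exact (hL l).const_mul _
  have hEl : (∑ l ∈ Finset.range (n+1), (n.choose l : ℚ_[p]) * (z:ℚ_[p])^(n-l) * L l)
      = ∑ l ∈ Finset.range (n+1), (n.choose l : ℚ_[p]) * (z:ℚ_[p])^(n-l) * E l := by
    exact Finset.sum_congr rfl fun l _ => by rw [hLE l]
  rw [← hEl]
  exact htends.congr (fun N => (hfun N).symm)
end

section
/- Let K be a field of characteristic zero, h an integer, q a nonzero element of K with q^h ≠ −1, v ≥ 1 an integer, and z ∈ K. Then for every n ≥ 0, E_{n,q}^{(h,v)}(z) = Σ_{m=0}^{n} Σ_{l_1,…,l_v ≥ 0, l_1+⋯+l_v = m} C(n,m) · (m choose l_1,…,l_v) · z^{n−m} · Π_{j=1}^{v} E_{l_j,q}^{(h)}, where C(n,m) is the binomial coefficient and (m choose l_1,…,l_v) = m!/(l_1!⋯l_v!) is the multinomial coefficient. -/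
open Finset in
private lemma hq_euler_aux (K : Type*) [Field K] [CharZero K] (v n m : ℕ) (hm : m ≤ n) (z : K)
    (E₁ : ℕ → K) (F : PowerSeries K)
    (hF : F = PowerSeries.mk (fun n => E₁ n / n.factorial)) :
    (n.factorial : K) * (PowerSeries.coeff m (F ^ v) * (z ^ (n - m) / (n - m).factorial)) =
      ∑ l ∈ (Fintype.piFinset fun _ : Fin v => Finset.range (m + 1)).filter
            (fun l => ∑ j, l j = m),
          (n.choose m : K) * (Nat.multinomial Finset.univ l : K) * z ^ (n - m) *
            ∏ j, E₁ (l j) := by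
  have hpow : F ^ v = ∏ _j : Fin v, F := by simp
  rw [hpow, PowerSeries.coeff_prod]
  rw [Finset.sum_mul, Finset.mul_sum]
  refine Finset.sum_nbij' (fun l => ⇑l) (fun g => Finsupp.equivFunOnFinite.symm g) ?_ ?_ ?_ ?_ ?_
  · intro l hl
    rw [Finset.mem_finsuppAntidiag] at hl
    simp only [Finset.mem_filter, Fintype.mem_piFinset, Finset.mem_range]
    refine ⟨fun j => Nat.lt_succ_of_le ?_, hl.1⟩
    rw [← hl.1]
    exact Finset.single_le_sum (fun i _ => Nat.zero_le _) (Finset.mem_univ j)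
  · intro g hg
    rw [Finset.mem_finsuppAntidiag]
    simp only [Finset.mem_filter] at hg
    exact ⟨by simpa using hg.2, Finset.subset_univ _⟩
  · intro l _; exact Finsupp.equivFunOnFinite.symm_apply_apply l
  · intro g _; exact Finsupp.equivFunOnFinite.apply_symm_apply g
  · intro l hl
    rw [Finset.mem_finsuppAntidiag] at hl
    have hsum : ∑ j, l j = m := hl.1
    have h1 : ((∏ j, (l j).factorial : ℕ) : K) * (Nat.multinomial Finset.univ ⇑l : K) = (m.factorial : K) := by
      rw [← Nat.cast_mul, Nat.multinomial_spec, hsum]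
    have h2 : ((n.choose m : ℕ) : K) * m.factorial * (n - m).factorial = n.factorial := by
      rw [← Nat.cast_mul, ← Nat.cast_mul, Nat.choose_mul_factorial_mul_factorial hm]
    have hprod : ∏ j, PowerSeries.coeff (l j) F = (∏ j, E₁ (l j)) / (∏ j, ((l j).factorial : K)) := by
      rw [hF]
      simp only [PowerSeries.coeff_mk]
      rw [Finset.prod_div_distrib]
    rw [hprod]
    have hQ : (∏ j, ((l j).factorial : K)) ≠ 0 :=
      Finset.prod_ne_zero_iff.2 fun j _ => Nat.cast_ne_zero.2 (l j).factorial_ne_zero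
    have hD : ((n - m).factorial : K) ≠ 0 := Nat.cast_ne_zero.2 (n - m).factorial_ne_zero
    push_cast at h1 h2 ⊢
    rw [div_mul_div_comm, mul_div_assoc', div_eq_iff (mul_ne_zero hQ hD)]
    linear_combination -(z ^ (n-m) * ∏ j, E₁ (l j)) * ((n.choose m : K) * ((n-m).factorial : K) * h1 + h2)

/-- Over a field `K` of characteristic zero, with `q ≠ 0`, `q^h ≠ -1`, `v ≥ 1` and
`z ∈ K`, let `E₁` be the `(h,q)`-Euler numbers (EGF `2/(q^h e^t + 1)`) and `Ev z` the
higher-order `(h,q)`-Euler polynomials (EGF via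
`(q^h e^t + 1)^v · Σ_n Ev z n t^n/n! = 2^v e^{tz}`). Then
`Ev z n = Σ_{m≤n} Σ_{l₁+⋯+l_v=m} C(n,m) (m choose l₁,…,l_v) z^{n-m} Π_j E₁ (l j)`. -/
theorem higher_order_hq_euler_poly_complete_sum (K : Type*) [Field K] [CharZero K]
    (h : ℤ) (q : K) (hq : q ≠ 0) (hqh : q ^ h ≠ -1) (v : ℕ) (hv : 1 ≤ v) (z : K)
    (E₁ : ℕ → K) (Ev : K → ℕ → K)
    (hE₁ : (PowerSeries.C (q ^ h) * PowerSeries.exp K + 1) *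
        PowerSeries.mk (fun n => E₁ n / n.factorial) = PowerSeries.C (2 : K))
    (hEv : ∀ w : K,
      (PowerSeries.C (q ^ h) * PowerSeries.exp K + 1) ^ v *
          PowerSeries.mk (fun n => Ev w n / n.factorial)
        = PowerSeries.C ((2 : K) ^ v) * PowerSeries.mk (fun n => w ^ n / n.factorial)) :
    ∀ n : ℕ, Ev z n =
      ∑ m ∈ Finset.range (n + 1),
        ∑ l ∈ (Fintype.piFinset fun _ : Fin v => Finset.range (m + 1)).filter
            (fun l => ∑ j, l j = m),
          (n.choose m : K) * (Nat.multinomial Finset.univ l : K) * z ^ (n - m) *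
            ∏ j, E₁ (l j) := by
  classical
  intro n
  set A := PowerSeries.C (q ^ h) * PowerSeries.exp K + 1 with hA
  set F := PowerSeries.mk (fun n => E₁ n / n.factorial) with hF
  set Z := PowerSeries.mk (fun n : ℕ => z ^ n / n.factorial) with hZ
  have hA0 : A ≠ 0 := by
    intro h0
    have := congrArg ((PowerSeries.constantCoeff : PowerSeries K →+* K)) h0
    simp [hA] at this
    exact hqh (by linear_combination this)
  have key : PowerSeries.mk (fun n => Ev z n / n.factorial) = F ^ v * Z := by
    apply mul_left_cancel₀ (pow_ne_zero v hA0)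
    rw [hEv z, ← mul_assoc, ← mul_pow, hE₁, ← map_pow]
  have hcoeff := congrArg (PowerSeries.coeff n) key
  rw [PowerSeries.coeff_mk, PowerSeries.coeff_mul,
    Finset.Nat.sum_antidiagonal_eq_sum_range_succ
      (fun a b => PowerSeries.coeff a (F ^ v) * PowerSeries.coeff b Z)] at hcoeff
  simp only [hZ, PowerSeries.coeff_mk] at hcoeff
  have hn : (n.factorial : K) ≠ 0 := Nat.cast_ne_zero.2 n.factorial_ne_zero
  rw [div_eq_iff hn] at hcoeff
  have step1 : Ev z n = (n.factorial : K) *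
      ∑ m ∈ Finset.range (n + 1),
        PowerSeries.coeff m (F ^ v) * (z ^ (n - m) / (n - m).factorial) := by
    rw [hcoeff]; ring
  rw [step1, Finset.mul_sum]
  refine Finset.sum_congr rfl fun m hm => ?_
  exact hq_euler_aux K v n m (Nat.lt_succ_iff.mp (Finset.mem_range.mp hm)) z E₁ F hF
end

section
/- Let K be a field of characteristic zero, h an integer, q a nonzero element of K with q^h ≠ −1, v ≥ 1 an integer, and y_1, y_2, …, y_v ∈ K. Then for every n ≥ 0, the complete sum of products formula holds: E_{n,q}^{(h,v)}(y_1 + y_2 + ⋯ + y_v) = Σ_{l_1,…,l_v ≥ 0, l_1+⋯+l_v = n} (n choose l_1,…,l_v) · Π_{j=1}^{v} E_{l_j,q}^{(h)}(y_j), where (n choose l_1,…,l_v) = n!/(l_1!⋯l_v!) is the multinomial coefficient. -/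
open PowerSeries Finset

/-- Complete sum of products of `(h,q)`-Euler polynomials. Over a field `K` of
characteristic zero, with `q ≠ 0`, `q^h ≠ -1` and `v ≥ 1`, let `E₁ x` be the
`(h,q)`-Euler polynomials (EGF via `(q^h e^t + 1) · Σ_n E₁ x n t^n/n! = 2 e^{tx}`)
and `Ev z` the higher-order ones (EGF via
`(q^h e^t + 1)^v · Σ_n Ev z n t^n/n! = 2^v e^{tz}`). Then for `y₁,…,y_v ∈ K`,
`Ev (y₁+⋯+y_v) n = Σ_{l₁+⋯+l_v=n} (n choose l₁,…,l_v) Π_j E₁ (y j) (l j)`. -/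
theorem complete_sum_products_hq_euler_polynomials (K : Type*) [Field K] [CharZero K]
    (h : ℤ) (q : K) (hq : q ≠ 0) (hqh : q ^ h ≠ -1) (v : ℕ) (hv : 1 ≤ v)
    (y : Fin v → K) (E₁ Ev : K → ℕ → K)
    (hE₁ : ∀ x : K,
      (PowerSeries.C (R := K) (q ^ h) * PowerSeries.exp K + 1) *
          PowerSeries.mk (fun n => E₁ x n / n.factorial)
        = PowerSeries.C (R := K) 2 * PowerSeries.mk (fun n => x ^ n / n.factorial))
    (hEv : ∀ w : K,
      (PowerSeries.C (R := K) (q ^ h) * PowerSeries.exp K + 1) ^ v *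
          PowerSeries.mk (fun n => Ev w n / n.factorial)
        = PowerSeries.C (R := K) (2 ^ v) * PowerSeries.mk (fun n => w ^ n / n.factorial)) :
    ∀ n : ℕ, Ev (∑ j, y j) n =
      ∑ l ∈ (Fintype.piFinset fun _ : Fin v => Finset.range (n + 1)).filter
          (fun l => ∑ j, l j = n),
        (Nat.multinomial Finset.univ l : K) * ∏ j, E₁ (y j) (l j) := by
  intro n
  set D : PowerSeries K := PowerSeries.C (R := K) (q ^ h) * PowerSeries.exp K + 1 with hD
  have hDne : D ≠ 0 := by
    intro h0
    have : PowerSeries.constantCoeff D = 0 := by rw [h0]; simp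
    rw [hD] at this
    simp only [map_add, map_mul, map_one, PowerSeries.constantCoeff_C,
      PowerSeries.constantCoeff_exp, mul_one] at this
    exact hqh (by linear_combination this)
  have hexp : ∀ x : K, PowerSeries.mk (fun n => x ^ n / (n.factorial : K))
      = PowerSeries.rescale x (PowerSeries.exp K) := by
    intro x
    ext m
    rw [PowerSeries.coeff_mk, PowerSeries.coeff_rescale, PowerSeries.coeff_exp,
      map_div₀, map_one, map_natCast]
    ring
  have hprodexp : ∏ j, PowerSeries.rescale (y j) (PowerSeries.exp K)
      = PowerSeries.rescale (∑ j, y j) (PowerSeries.exp K) := by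
    classical
    induction (Finset.univ : Finset (Fin v)) using Finset.cons_induction with
    | empty =>
        simp [PowerSeries.rescale_zero, PowerSeries.constantCoeff_exp]
    | cons a s ha ih =>
        rw [Finset.prod_cons, Finset.sum_cons, ih,
          PowerSeries.exp_mul_exp_eq_exp_add]
  have key : PowerSeries.mk (fun m => Ev (∑ j, y j) m / (m.factorial : K))
      = ∏ j, PowerSeries.mk (fun m => E₁ (y j) m / (m.factorial : K)) := by
    apply mul_left_cancel₀ (pow_ne_zero v hDne)
    rw [hEv, hexp, ← hprodexp]
    rw [show (D : PowerSeries K) ^ v * ∏ j, PowerSeries.mk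
        (fun m => E₁ (y j) m / (m.factorial : K)) =
        ∏ j, (D * PowerSeries.mk (fun m => E₁ (y j) m / (m.factorial : K))) by
      rw [Finset.prod_mul_distrib, Finset.prod_const, Finset.card_univ, Fintype.card_fin]]
    simp_rw [hE₁, hexp]
    rw [Finset.prod_mul_distrib, Finset.prod_const, Finset.card_univ, Fintype.card_fin,
      ← map_pow]
  have hc := congrArg (PowerSeries.coeff n) key
  rw [PowerSeries.coeff_mk, PowerSeries.coeff_prod] at hc
  simp_rw [PowerSeries.coeff_mk] at hc
  -- convert the filtered piFinset sum to a sum over finsuppAntidiag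
  have hbij : ∑ l ∈ (Fintype.piFinset fun _ : Fin v => Finset.range (n + 1)).filter
          (fun l => ∑ j, l j = n),
        (Nat.multinomial Finset.univ l : K) * ∏ j, E₁ (y j) (l j)
      = ∑ l ∈ Finset.finsuppAntidiag (Finset.univ : Finset (Fin v)) n,
        (Nat.multinomial Finset.univ ⇑l : K) * ∏ j, E₁ (y j) (l j) := by
    apply Finset.sum_nbij' (fun l => Finsupp.equivFunOnFinite.symm l)
      (fun l => (l : Fin v → ℕ))
    · intro a ha
      simp only [Finset.mem_filter] at ha
      rw [Finset.mem_finsuppAntidiag]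
      refine ⟨?_, Finset.subset_univ _⟩
      simpa using ha.2
    · intro a ha
      rw [Finset.mem_finsuppAntidiag] at ha
      simp only [Finset.mem_filter, Fintype.mem_piFinset, Finset.mem_range]
      constructor
      · intro j
        have : a j ≤ n := by
          rw [← ha.1]
          exact Finset.single_le_sum (fun i _ => Nat.zero_le _) (Finset.mem_univ j)
        omega
      · simpa using ha.1
    · intro a _; rfl
    · intro a _; simp
    · intro a _; rfl
  rw [hbij]
  have hfact : (n.factorial : K) ≠ 0 := by exact_mod_cast n.factorial_ne_zero
  have := hc
  rw [div_eq_iff hfact] at this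
  rw [this, Finset.sum_mul]
  apply Finset.sum_congr rfl
  intro l hl
  rw [Finset.mem_finsuppAntidiag] at hl
  have hmul : (Nat.multinomial Finset.univ ⇑l) * ∏ j, (l j).factorial = n.factorial := by
    rw [mul_comm, Nat.multinomial_spec]
    congr 1
    simpa using hl.1
  have hlf : ∀ j : Fin v, ((l j).factorial : K) ≠ 0 :=
    fun j => by exact_mod_cast (l j).factorial_ne_zero
  have hcast : (n.factorial : K) = (Nat.multinomial Finset.univ ⇑l : K) *
      ∏ j, ((l j).factorial : K) := by exact_mod_cast hmul.symm
  have hprodne : (∏ j, ((l j).factorial : K)) ≠ 0 :=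
    Finset.prod_ne_zero_iff.2 fun j _ => hlf j
  rw [Finset.prod_div_distrib, hcast]
  field_simp
end

section
/- Let K be a field of characteristic zero, h an integer, q a nonzero element of K with q^h ≠ −1, v ≥ 1 an integer, and y, z ∈ K. Then for every n ≥ 0, the addition theorem E_{n,q}^{(h,v)}(z + y) = Σ_{l=0}^{n} C(n,l) E_{l,q}^{(h,v)}(y) z^{n−l} holds, where C(n,l) is the binomial coefficient. -/
/-- Addition theorem for the higher-order `(h,q)`-Euler polynomials. Over a field `K`
of characteristic zero, with `q ≠ 0`, `q^h ≠ -1` and `v ≥ 1`, let `Ev w` be the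
higher-order `(h,q)`-Euler polynomials (EGF via
`(q^h e^t + 1)^v · Σ_n Ev w n t^n/n! = 2^v e^{tw}`). Then for `y, z ∈ K`,
`Ev (z + y) n = Σ_{l≤n} C(n,l) Ev y l z^{n-l}`. -/
theorem addition_theorem_higher_order_hq_euler (K : Type*) [Field K] [CharZero K]
    (h : ℤ) (q : K) (hq : q ≠ 0) (hqh : q ^ h ≠ -1) (v : ℕ) (hv : 1 ≤ v) (y z : K)
    (Ev : K → ℕ → K)
    (hEv : ∀ w : K,
      (PowerSeries.C (q ^ h) * PowerSeries.exp K + 1) ^ v *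
          PowerSeries.mk (fun n => Ev w n / n.factorial)
        = PowerSeries.C ((2 : K) ^ v) * PowerSeries.mk (fun n => w ^ n / n.factorial)) :
    ∀ n : ℕ, Ev (z + y) n =
      ∑ l ∈ Finset.range (n + 1), (n.choose l : K) * Ev y l * z ^ (n - l) := by
  have hmk : ∀ w : K, PowerSeries.mk (fun n => w ^ n / (n.factorial : K))
      = PowerSeries.rescale w (PowerSeries.exp K) := by
    intro w
    ext k
    rw [PowerSeries.coeff_mk, PowerSeries.coeff_rescale, PowerSeries.coeff_exp]
    simp [div_eq_mul_inv]
  have hA : ((PowerSeries.C (q ^ h) * PowerSeries.exp K + 1) ^ v) ≠ 0 := by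
    intro h0
    have hc := congrArg (PowerSeries.constantCoeff) h0
    simp only [map_pow, map_add, map_mul, map_one, PowerSeries.constantCoeff_C,
      PowerSeries.constantCoeff_exp, mul_one] at hc
    rw [map_zero] at hc
    have : q ^ h + 1 = 0 := pow_eq_zero_iff (by omega) |>.mp hc
    exact hqh (eq_neg_of_add_eq_zero_left this)
  have key : PowerSeries.mk (fun n => Ev (z + y) n / (n.factorial : K))
      = PowerSeries.mk (fun n => Ev y n / (n.factorial : K)) *
        PowerSeries.rescale z (PowerSeries.exp K) := by
    apply mul_left_cancel₀ hA
    rw [hEv (z + y), ← mul_assoc, hEv y, mul_assoc]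
    rw [hmk, hmk, PowerSeries.exp_mul_exp_eq_exp_add, add_comm y z]
  intro n
  have hc := congrArg (PowerSeries.coeff n) key
  rw [PowerSeries.coeff_mul, Finset.Nat.sum_antidiagonal_eq_sum_range_succ_mk] at hc
  simp only [PowerSeries.coeff_mk, PowerSeries.coeff_rescale, PowerSeries.coeff_exp,
    map_div₀, map_one, map_natCast] at hc
  have hfac : (n.factorial : K) ≠ 0 := Nat.cast_ne_zero.mpr n.factorial_ne_zero
  have := congrArg (fun x => (n.factorial : K) * x) hc
  simp only [Finset.mul_sum] at this
  rw [mul_div_cancel₀ _ hfac] at this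
  rw [this]
  apply Finset.sum_congr rfl
  intro l hl
  have hln : l ≤ n := Nat.lt_succ_iff.mp (Finset.mem_range.mp hl)
  have h1 : ((l.factorial : K)) ≠ 0 := Nat.cast_ne_zero.mpr l.factorial_ne_zero
  have h2 : (((n - l).factorial : K)) ≠ 0 := Nat.cast_ne_zero.mpr (n - l).factorial_ne_zero
  rw [Nat.cast_choose K hln]
  field_simp
end

section
/- Let K be a field of characteristic zero, h an integer, q a nonzero element of K with q^h ≠ −1, and y_1, y_2 ∈ K. Then for every n ≥ 0, Σ_{m=0}^{n} C(n,m) E_{m,q}^{(h,2)}(y_1) y_2^{n−m} = Σ_{l_1,l_2 ≥ 0, l_1+l_2 = n} (n choose l_1,l_2) · E_{l_1,q}^{(h)}(y_1) · E_{l_2,q}^{(h)}(y_2), where C(n,m) is the binomial coefficient, (n choose l_1,l_2) = n!/(l_1! l_2!), E_{m,q}^{(h,2)}(z) denotes the second-order (h,q)-Euler polynomial, and E_{l,q}^{(h)}(x) the (first-order) (h,q)-Euler polynomial. -/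
lemma multinomial_two_eq_choose (a b : ℕ) :
    Nat.multinomial Finset.univ ![a, b] = (a + b).choose a := by
  have huniv : (Finset.univ : Finset (Fin 2)) = {0, 1} := by decide
  rw [huniv, Nat.binomial_eq_choose (by decide)]
  simp

/-- Over a field `K` of characteristic zero, with `q ≠ 0` and `q^h ≠ -1`, let `E₁ x`
be the `(h,q)`-Euler polynomials (EGF via `(q^h e^t + 1) · Σ_n E₁ x n t^n/n! = 2 e^{tx}`)
and `E₂ z` the second-order `(h,q)`-Euler polynomials (EGF via
`(q^h e^t + 1)² · Σ_n E₂ z n t^n/n! = 4 e^{tz}`). Then for `y₁, y₂ ∈ K`,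
`Σ_{m≤n} C(n,m) E₂ y₁ m y₂^{n-m} = Σ_{l₁+l₂=n} (n choose l₁,l₂) E₁ y₁ l₁ E₁ y₂ l₂`. -/
theorem second_order_hq_euler_identity (K : Type*) [Field K] [CharZero K]
    (h : ℤ) (q : K) (hq : q ≠ 0) (hqh : q ^ h ≠ -1) (y₁ y₂ : K)
    (E₁ E₂ : K → ℕ → K)
    (hE₁ : ∀ x : K,
      (PowerSeries.C (R := K) (q ^ h) * PowerSeries.exp K + 1) *
          PowerSeries.mk (fun n => E₁ x n / n.factorial)
        = PowerSeries.C (R := K) 2 * PowerSeries.mk (fun n => x ^ n / n.factorial))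
    (hE₂ : ∀ z : K,
      (PowerSeries.C (R := K) (q ^ h) * PowerSeries.exp K + 1) ^ 2 *
          PowerSeries.mk (fun n => E₂ z n / n.factorial)
        = PowerSeries.C (R := K) 4 * PowerSeries.mk (fun n => z ^ n / n.factorial)) :
    ∀ n : ℕ,
      (∑ m ∈ Finset.range (n + 1), (n.choose m : K) * E₂ y₁ m * y₂ ^ (n - m))
        = ∑ l ∈ Finset.HasAntidiagonal.antidiagonal n,
            (Nat.multinomial Finset.univ ![l.1, l.2] : K) * E₁ y₁ l.1 * E₁ y₂ l.2 := by
  intro n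
  set A : PowerSeries K := PowerSeries.C (R := K) (q ^ h) * PowerSeries.exp K + 1 with hA
  have hA0 : PowerSeries.constantCoeff A ≠ 0 := by
    have : PowerSeries.constantCoeff A = q ^ h + 1 := by
      simp [hA]
    rw [this]
    intro hcontra
    exact hqh (by linear_combination hcontra)
  have hAne : A ≠ 0 := fun hz => hA0 (by rw [hz]; simp)
  -- key power series identity
  have key : PowerSeries.mk (fun n => E₂ y₁ n / n.factorial) *
      PowerSeries.mk (fun n => y₂ ^ n / n.factorial)
      = PowerSeries.mk (fun n => E₁ y₁ n / n.factorial) *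
        PowerSeries.mk (fun n => E₁ y₂ n / n.factorial) := by
    have h4 : (PowerSeries.C (R := K) 4 : PowerSeries K) =
        PowerSeries.C (R := K) 2 * PowerSeries.C (R := K) 2 := by
      rw [← map_mul]; norm_num
    apply mul_left_cancel₀ (pow_ne_zero 2 hAne)
    calc A ^ 2 * (PowerSeries.mk (fun n => E₂ y₁ n / n.factorial) *
            PowerSeries.mk (fun n => y₂ ^ n / n.factorial))
        = (A ^ 2 * PowerSeries.mk (fun n => E₂ y₁ n / n.factorial)) *
            PowerSeries.mk (fun n => y₂ ^ n / n.factorial) := by ring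
      _ = (PowerSeries.C (R := K) 2 * PowerSeries.mk (fun n => y₁ ^ n / n.factorial)) *
            (PowerSeries.C (R := K) 2 * PowerSeries.mk (fun n => y₂ ^ n / n.factorial)) := by
          rw [hE₂ y₁, h4]; ring
      _ = (A * PowerSeries.mk (fun n => E₁ y₁ n / n.factorial)) *
            (A * PowerSeries.mk (fun n => E₁ y₂ n / n.factorial)) := by
          rw [hE₁ y₁, hE₁ y₂]
      _ = A ^ 2 * (PowerSeries.mk (fun n => E₁ y₁ n / n.factorial) *
            PowerSeries.mk (fun n => E₁ y₂ n / n.factorial)) := by ring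
  have hcoeff := congrArg (fun f => (n.factorial : K) * PowerSeries.coeff n f) key
  simp only [PowerSeries.coeff_mul, PowerSeries.coeff_mk, Finset.mul_sum] at hcoeff
  calc (∑ m ∈ Finset.range (n + 1), (n.choose m : K) * E₂ y₁ m * y₂ ^ (n - m))
      = ∑ l ∈ Finset.HasAntidiagonal.antidiagonal n,
          (n.factorial : K) * (E₂ y₁ l.1 / l.1.factorial * (y₂ ^ l.2 / l.2.factorial)) := by
        rw [Finset.Nat.sum_antidiagonal_eq_sum_range_succ
          (fun a b => (n.factorial : K) * (E₂ y₁ a / a.factorial * (y₂ ^ b / b.factorial)))]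
        refine Finset.sum_congr rfl fun m hm => ?_
        have hmn : m ≤ n := Nat.lt_succ_iff.mp (Finset.mem_range.mp hm)
        rw [Nat.cast_choose K hmn]
        have h1 : (m.factorial : K) ≠ 0 := Nat.cast_ne_zero.mpr m.factorial_ne_zero
        have h2 : ((n - m).factorial : K) ≠ 0 := Nat.cast_ne_zero.mpr (n - m).factorial_ne_zero
        field_simp
    _ = ∑ l ∈ Finset.HasAntidiagonal.antidiagonal n,
          (n.factorial : K) * (E₁ y₁ l.1 / l.1.factorial * (E₁ y₂ l.2 / l.2.factorial)) :=
        hcoeff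
    _ = ∑ l ∈ Finset.HasAntidiagonal.antidiagonal n,
          (Nat.multinomial Finset.univ ![l.1, l.2] : K) * E₁ y₁ l.1 * E₁ y₂ l.2 := by
        refine Finset.sum_congr rfl fun l hl => ?_
        have hl' : l.1 + l.2 = n := Finset.HasAntidiagonal.mem_antidiagonal.mp hl
        rw [multinomial_two_eq_choose, hl', Nat.cast_choose K (hl' ▸ Nat.le_add_right l.1 l.2)]
        have hsub : n - l.1 = l.2 := by omega
        rw [hsub]
        have h1 : (l.1.factorial : K) ≠ 0 := Nat.cast_ne_zero.mpr l.1.factorial_ne_zero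
        have h2 : (l.2.factorial : K) ≠ 0 := Nat.cast_ne_zero.mpr l.2.factorial_ne_zero
        field_simp
end
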